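/- arXiv:0810.3286 — 7 statements merged into one kernel-verified Lean document; each statement's English description precedes it below -/
import Mathlib

section
/- Let Y ∈ ℝ^{n₁×n₂} have SVD decomposed as Y = U₀Σ₀V₀* + U₁Σ₁V₁*, where U₀, V₀ collect the singular vectors associated with singular values strictly greater than τ > 0 and U₁, V₁ those associated with singular values at most τ. Then with X̂ := U₀(Σ₀ − τI)V₀* = D_τ(Y), the matrix W := τ⁻¹ U₁Σ₁V₁* satisfies U₀*W = 0, W V₀ = 0, and ‖W‖₂ ≤ 1, and hence Y − X̂ = τ(U₀V₀* + W) belongs to τ·∂‖X̂‖_*. -/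
open Matrix Filter Topology

noncomputable def frob {n₁ n₂ : ℕ} (X : Matrix (Fin n₁) (Fin n₂) ℝ) : ℝ :=
  Real.sqrt (∑ i, ∑ j, (X i j) ^ 2)

noncomputable def mInner {n₁ n₂ : ℕ} (X Y : Matrix (Fin n₁) (Fin n₂) ℝ) : ℝ :=
  ∑ i, ∑ j, X i j * Y i j

noncomputable def singVal {n₁ n₂ : ℕ} (X : Matrix (Fin n₁) (Fin n₂) ℝ) (j : Fin n₂) : ℝ :=
  Real.sqrt ((Matrix.isHermitian_conjTranspose_mul_self X).eigenvalues j)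

noncomputable def nuclearNorm {n₁ n₂ : ℕ} (X : Matrix (Fin n₁) (Fin n₂) ℝ) : ℝ :=
  ∑ j, singVal X j

noncomputable def specNorm {n₁ n₂ : ℕ} (X : Matrix (Fin n₁) (Fin n₂) ℝ) : ℝ :=
  ⨆ j, singVal X j

noncomputable def ftau {n₁ n₂ : ℕ} (τ : ℝ) (X : Matrix (Fin n₁) (Fin n₂) ℝ) : ℝ :=
  τ * nuclearNorm X + (1 / 2) * frob X ^ 2

def projSet {n₁ n₂ : ℕ} (Ω : Finset (Fin n₁ × Fin n₂)) (X : Matrix (Fin n₁) (Fin n₂) ℝ) :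
    Matrix (Fin n₁) (Fin n₂) ℝ :=
  Matrix.of fun i j => if (i, j) ∈ Ω then X i j else 0

def IsSubgradAt {n₁ n₂ : ℕ} (f : Matrix (Fin n₁) (Fin n₂) ℝ → ℝ)
    (Z X₀ : Matrix (Fin n₁) (Fin n₂) ℝ) : Prop :=
  ∀ X, f X₀ + mInner Z (X - X₀) ≤ f X

noncomputable def eNorm {m : ℕ} (v : Fin m → ℝ) : ℝ := Real.sqrt (∑ i, v i ^ 2)

noncomputable def eInner {m : ℕ} (v w : Fin m → ℝ) : ℝ := ∑ i, v i * w i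

section helpers

lemma dot_self_nonneg {m : ℕ} (v : Fin m → ℝ) : 0 ≤ v ⬝ᵥ v :=
  Finset.sum_nonneg fun i _ => mul_self_nonneg _

lemma mulVec_dot_mulVec {p q r : ℕ} (M : Matrix (Fin p) (Fin q) ℝ) (N : Matrix (Fin p) (Fin r) ℝ)
    (x : Fin q → ℝ) (y : Fin r → ℝ) :
    (M *ᵥ x) ⬝ᵥ (N *ᵥ y) = x ⬝ᵥ ((Mᵀ * N) *ᵥ y) :=
  calc (M *ᵥ x) ⬝ᵥ (N *ᵥ y) = (N *ᵥ y) ⬝ᵥ (M *ᵥ x) := dotProduct_comm _ _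
    _ = ((N *ᵥ y) ᵥ* M) ⬝ᵥ x := Matrix.dotProduct_mulVec _ _ _
    _ = (Mᵀ *ᵥ (N *ᵥ y)) ⬝ᵥ x := by rw [Matrix.mulVec_transpose]
    _ = ((Mᵀ * N) *ᵥ y) ⬝ᵥ x := by rw [Matrix.mulVec_mulVec]
    _ = x ⬝ᵥ ((Mᵀ * N) *ᵥ y) := dotProduct_comm _ _

lemma dot_mulVec_self {p q : ℕ} (M : Matrix (Fin p) (Fin q) ℝ) (hM : Mᵀ * M = 1)
    (x : Fin q → ℝ) : (M *ᵥ x) ⬝ᵥ (M *ᵥ x) = x ⬝ᵥ x := by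
  rw [mulVec_dot_mulVec, hM, Matrix.one_mulVec]

noncomputable def evec {n₁ n₂ : ℕ} (X : Matrix (Fin n₁) (Fin n₂) ℝ) (j : Fin n₂) : Fin n₂ → ℝ :=
  ⇑((Matrix.isHermitian_conjTranspose_mul_self X).eigenvectorBasis j)

lemma evec_dot {n₁ n₂ : ℕ} (X : Matrix (Fin n₁) (Fin n₂) ℝ) (j k : Fin n₂) :
    evec X j ⬝ᵥ evec X k = if j = k then 1 else 0 := by
  have h := (Matrix.isHermitian_conjTranspose_mul_self X).eigenvectorBasis.orthonormal
  rw [orthonormal_iff_ite] at h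
  simpa [PiLp.inner_apply, RCLike.inner_apply, conj_trivial, dotProduct, evec, mul_comm] using h j k

lemma evec_complete {n₁ n₂ : ℕ} (X : Matrix (Fin n₁) (Fin n₂) ℝ) (l m : Fin n₂) :
    (∑ j, evec X j l * evec X j m) = if l = m then 1 else 0 := by
  have h2 := (Matrix.mem_unitaryGroup_iff).mp
    (Matrix.IsHermitian.eigenvectorUnitary (Matrix.isHermitian_conjTranspose_mul_self X)).2
  have h3 := congrFun (congrFun (congrArg (fun (M : Matrix (Fin n₂) (Fin n₂) ℝ) => M) h2) l) m
  simpa [Matrix.mul_apply, Matrix.one_apply, Matrix.star_apply, evec,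
    Matrix.IsHermitian.eigenvectorUnitary_apply] using h3

lemma evec_eigen {n₁ n₂ : ℕ} (X : Matrix (Fin n₁) (Fin n₂) ℝ) (j : Fin n₂) :
    (Xᵀ * X) *ᵥ evec X j = (Matrix.isHermitian_conjTranspose_mul_self X).eigenvalues j • evec X j := by
  rw [← Matrix.conjTranspose_eq_transpose_of_trivial]
  exact (Matrix.isHermitian_conjTranspose_mul_self X).mulVec_eigenvectorBasis j

lemma eig_eq {n₁ n₂ : ℕ} (X : Matrix (Fin n₁) (Fin n₂) ℝ) (j : Fin n₂) :
    (Matrix.isHermitian_conjTranspose_mul_self X).eigenvalues j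
      = (X *ᵥ evec X j) ⬝ᵥ (X *ᵥ evec X j) := by
  rw [mulVec_dot_mulVec, evec_eigen, dotProduct_smul, smul_eq_mul]
  have h : evec X j ⬝ᵥ evec X j = 1 := by simpa using evec_dot X j j
  rw [h, mul_one]

lemma singVal_eq {n₁ n₂ : ℕ} (X : Matrix (Fin n₁) (Fin n₂) ℝ) (j : Fin n₂) :
    singVal X j = Real.sqrt ((X *ᵥ evec X j) ⬝ᵥ (X *ᵥ evec X j)) := by
  rw [singVal, eig_eq]

end helpers

section more

lemma mInner_eq_sum {n₁ n₂ : ℕ} (B C X : Matrix (Fin n₁) (Fin n₂) ℝ) :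
    mInner B C = ∑ j, (B *ᵥ evec X j) ⬝ᵥ (C *ᵥ evec X j) := by
  have h2 : ∀ j, (B *ᵥ evec X j) ⬝ᵥ (C *ᵥ evec X j)
      = ∑ l, ∑ m, (Bᵀ * C) l m * (evec X j l * evec X j m) := by
    intro j
    rw [mulVec_dot_mulVec]
    simp only [dotProduct, Matrix.mulVec, dotProduct, Finset.mul_sum]
    refine Finset.sum_congr rfl fun l _ => Finset.sum_congr rfl fun m _ => by ring
  have h1 : mInner B C = ∑ l, (Bᵀ * C) l l := by
    simp only [mInner, Matrix.mul_apply, Matrix.transpose_apply]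
    exact Finset.sum_comm
  rw [h1]
  simp_rw [h2]
  rw [Finset.sum_comm]
  refine Finset.sum_congr rfl fun l _ => ?_
  rw [Finset.sum_comm]
  have h3 : ∀ m, (∑ j, (Bᵀ * C) l m * (evec X j l * evec X j m))
      = (Bᵀ * C) l m * (if l = m then 1 else 0) := by
    intro m; rw [← Finset.mul_sum, evec_complete]
  simp_rw [h3]
  simp [mul_ite, mul_one, mul_zero]

lemma dot_le_sqrt {m : ℕ} (a b : Fin m → ℝ) :
    a ⬝ᵥ b ≤ Real.sqrt (a ⬝ᵥ a) * Real.sqrt (b ⬝ᵥ b) := by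
  have ha : a ⬝ᵥ a = ∑ i, a i ^ 2 := by simp [dotProduct, sq]
  have hb : b ⬝ᵥ b = ∑ i, b i ^ 2 := by simp [dotProduct, sq]
  have h := Finset.sum_mul_sq_le_sq_mul_sq Finset.univ a b
  calc a ⬝ᵥ b ≤ |a ⬝ᵥ b| := le_abs_self _
    _ = Real.sqrt ((a ⬝ᵥ b) ^ 2) := (Real.sqrt_sq_eq_abs _).symm
    _ ≤ Real.sqrt ((∑ i, a i ^ 2) * (∑ i, b i ^ 2)) := Real.sqrt_le_sqrt h
    _ = Real.sqrt (a ⬝ᵥ a) * Real.sqrt (b ⬝ᵥ b) := by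
        rw [ha, hb, Real.sqrt_mul (Finset.sum_nonneg fun i _ => sq_nonneg _)]

lemma singVal_le_one {n₁ n₂ : ℕ} (Wm : Matrix (Fin n₁) (Fin n₂) ℝ)
    (h : ∀ v, (Wm *ᵥ v) ⬝ᵥ (Wm *ᵥ v) ≤ v ⬝ᵥ v) (j : Fin n₂) : singVal Wm j ≤ 1 := by
  rw [singVal_eq]
  have h2 : evec Wm j ⬝ᵥ evec Wm j = 1 := by simpa using evec_dot Wm j j
  calc Real.sqrt ((Wm *ᵥ evec Wm j) ⬝ᵥ (Wm *ᵥ evec Wm j))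
      ≤ Real.sqrt (evec Wm j ⬝ᵥ evec Wm j) := Real.sqrt_le_sqrt (h _)
    _ = 1 := by rw [h2, Real.sqrt_one]

lemma mInner_le_nuclearNorm {n₁ n₂ : ℕ} (Z X : Matrix (Fin n₁) (Fin n₂) ℝ)
    (hZ : ∀ v, (Z *ᵥ v) ⬝ᵥ (Z *ᵥ v) ≤ v ⬝ᵥ v) : mInner Z X ≤ nuclearNorm X := by
  rw [mInner_eq_sum Z X X, nuclearNorm]
  refine Finset.sum_le_sum fun j _ => ?_
  have cs := dot_le_sqrt (Z *ᵥ evec X j) (X *ᵥ evec X j)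
  have h2 : evec X j ⬝ᵥ evec X j = 1 := by simpa using evec_dot X j j
  have h1 : Real.sqrt ((Z *ᵥ evec X j) ⬝ᵥ (Z *ᵥ evec X j)) ≤ 1 := by
    calc Real.sqrt ((Z *ᵥ evec X j) ⬝ᵥ (Z *ᵥ evec X j))
        ≤ Real.sqrt (evec X j ⬝ᵥ evec X j) := Real.sqrt_le_sqrt (hZ _)
      _ = 1 := by rw [h2, Real.sqrt_one]
  rw [singVal_eq]
  calc (Z *ᵥ evec X j) ⬝ᵥ (X *ᵥ evec X j)
      ≤ Real.sqrt ((Z *ᵥ evec X j) ⬝ᵥ (Z *ᵥ evec X j))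
        * Real.sqrt ((X *ᵥ evec X j) ⬝ᵥ (X *ᵥ evec X j)) := cs
    _ ≤ 1 * Real.sqrt ((X *ᵥ evec X j) ⬝ᵥ (X *ᵥ evec X j)) :=
        mul_le_mul_of_nonneg_right h1 (Real.sqrt_nonneg _)
    _ = _ := one_mul _

lemma proj_bound {n₂ r₀ r₁ : ℕ} (V₀ : Matrix (Fin n₂) (Fin r₀) ℝ) (V₁ : Matrix (Fin n₂) (Fin r₁) ℝ)
    (hV₀ : V₀ᵀ * V₀ = 1) (hV₁ : V₁ᵀ * V₁ = 1) (hV01 : V₀ᵀ * V₁ = 0) (v : Fin n₂ → ℝ) :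
    (V₀ᵀ *ᵥ v) ⬝ᵥ (V₀ᵀ *ᵥ v) + (V₁ᵀ *ᵥ v) ⬝ᵥ (V₁ᵀ *ᵥ v) ≤ v ⬝ᵥ v := by
  set a := V₀ᵀ *ᵥ v with ha
  set b := V₁ᵀ *ᵥ v with hb
  have e1 : (V₀ *ᵥ a) ⬝ᵥ (V₀ *ᵥ a) = a ⬝ᵥ a := dot_mulVec_self V₀ hV₀ a
  have e2 : (V₁ *ᵥ b) ⬝ᵥ (V₁ *ᵥ b) = b ⬝ᵥ b := dot_mulVec_self V₁ hV₁ b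
  have e3 : (V₀ *ᵥ a) ⬝ᵥ (V₁ *ᵥ b) = 0 := by
    rw [mulVec_dot_mulVec, hV01, Matrix.zero_mulVec, dotProduct_zero]
  have e4 : v ⬝ᵥ (V₀ *ᵥ a) = a ⬝ᵥ a := by
    rw [Matrix.dotProduct_mulVec, ← Matrix.mulVec_transpose, ← ha]
  have e5 : v ⬝ᵥ (V₁ *ᵥ b) = b ⬝ᵥ b := by
    rw [Matrix.dotProduct_mulVec, ← Matrix.mulVec_transpose, ← hb]
  have h0 : (0:ℝ) ≤ (v - V₀ *ᵥ a - V₁ *ᵥ b) ⬝ᵥ (v - V₀ *ᵥ a - V₁ *ᵥ b) := dot_self_nonneg _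
  have c1 : (V₀ *ᵥ a) ⬝ᵥ v = a ⬝ᵥ a := by rw [dotProduct_comm, e4]
  have c2 : (V₁ *ᵥ b) ⬝ᵥ v = b ⬝ᵥ b := by rw [dotProduct_comm, e5]
  have c3 : (V₁ *ᵥ b) ⬝ᵥ (V₀ *ᵥ a) = 0 := by rw [dotProduct_comm, e3]
  have expand : (v - V₀ *ᵥ a - V₁ *ᵥ b) ⬝ᵥ (v - V₀ *ᵥ a - V₁ *ᵥ b)
      = v ⬝ᵥ v - a ⬝ᵥ a - b ⬝ᵥ b := by
    simp only [sub_dotProduct, dotProduct_sub, e1, e2, e3, e4, e5, c1, c2, c3]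
    ring
  rw [expand] at h0
  linarith

end more

lemma nuclearNorm_le_mInner {n₁ n₂ r₀ : ℕ}
    (U₀ : Matrix (Fin n₁) (Fin r₀) ℝ) (V₀ : Matrix (Fin n₂) (Fin r₀) ℝ) (d : Fin r₀ → ℝ)
    (hd : ∀ i, 0 < d i) (hU₀ : U₀ᵀ * U₀ = 1) (hV₀ : V₀ᵀ * V₀ = 1)
    (Z : Matrix (Fin n₁) (Fin n₂) ℝ)
    (hZX : Zᵀ * (U₀ * Matrix.diagonal d * V₀ᵀ) = V₀ * Matrix.diagonal d * V₀ᵀ) :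
    nuclearNorm (U₀ * Matrix.diagonal d * V₀ᵀ) ≤ mInner Z (U₀ * Matrix.diagonal d * V₀ᵀ) := by
  set Xh := U₀ * Matrix.diagonal d * V₀ᵀ with hXh
  have hXhT : Xhᵀ = V₀ * (Matrix.diagonal d * U₀ᵀ) := by
    rw [hXh, Matrix.transpose_mul, Matrix.transpose_mul, Matrix.transpose_transpose,
      Matrix.diagonal_transpose]
  have hA : Xhᵀ * Xh = V₀ * (Matrix.diagonal d * (Matrix.diagonal d * V₀ᵀ)) := by
    rw [hXhT, hXh]
    calc V₀ * (Matrix.diagonal d * U₀ᵀ) * (U₀ * Matrix.diagonal d * V₀ᵀ)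
        = V₀ * (Matrix.diagonal d * ((U₀ᵀ * U₀) * (Matrix.diagonal d * V₀ᵀ))) := by
          simp only [Matrix.mul_assoc]
      _ = V₀ * (Matrix.diagonal d * (Matrix.diagonal d * V₀ᵀ)) := by
          rw [hU₀, Matrix.one_mul]
  rw [mInner_eq_sum Z Xh Xh, nuclearNorm]
  refine Finset.sum_le_sum fun j _ => ?_
  set lam := (Matrix.isHermitian_conjTranspose_mul_self Xh).eigenvalues j with hlamdef
  set qj := evec Xh j with hqj
  set w := V₀ᵀ *ᵥ qj with hw
  -- eigen relation transported to w
  have h3 : V₀ᵀ * (Xhᵀ * Xh) = Matrix.diagonal d * (Matrix.diagonal d * V₀ᵀ) := by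
    rw [hA, ← Matrix.mul_assoc, hV₀, Matrix.one_mul]
  have h2 : (Matrix.diagonal d * (Matrix.diagonal d * V₀ᵀ)) *ᵥ qj = lam • w := by
    rw [← h3, ← Matrix.mulVec_mulVec, evec_eigen, Matrix.mulVec_smul]
  have h2' : Matrix.diagonal d *ᵥ (Matrix.diagonal d *ᵥ w) = lam • w := by
    rw [hw, Matrix.mulVec_mulVec, Matrix.mulVec_mulVec, Matrix.mul_assoc]; exact h2
  have hkey : ∀ i, d i * (d i * w i) = lam * w i := by
    intro i
    have := congrFun h2' i
    simpa [Matrix.mulVec_diagonal] using this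
  have hXv : Xh *ᵥ qj = U₀ *ᵥ (Matrix.diagonal d *ᵥ w) := by
    rw [hXh, Matrix.mulVec_mulVec, Matrix.mulVec_mulVec]
  have hlam : lam = ∑ i, (d i * w i) * (d i * w i) := by
    rw [hlamdef, eig_eq, ← hqj, hXv, dot_mulVec_self U₀ hU₀]
    simp [dotProduct, Matrix.mulVec_diagonal]
  have hZv : (Z *ᵥ qj) ⬝ᵥ (Xh *ᵥ qj) = ∑ i, w i * (d i * w i) := by
    rw [mulVec_dot_mulVec, hZX, Matrix.mul_assoc, ← Matrix.mulVec_mulVec,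
      Matrix.dotProduct_mulVec, ← Matrix.mulVec_transpose, ← hw, ← Matrix.mulVec_mulVec]
    simp [dotProduct, Matrix.mulVec_diagonal, ← hw]
  have hsing : singVal Xh j = Real.sqrt lam := rfl
  rw [hZv, hsing]
  have hlam0 : 0 ≤ lam := by
    rw [hlam]; exact Finset.sum_nonneg fun i _ => mul_self_nonneg _
  rcases eq_or_lt_of_le hlam0 with h0 | hpos
  · rw [← h0, Real.sqrt_zero]
    refine Finset.sum_nonneg fun i _ => ?_
    have := mul_self_nonneg (w i)
    nlinarith [hd i]
  · have hterm : ∀ i, w i * (d i * w i) = Real.sqrt lam * (w i * w i) := by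
      intro i
      by_cases hwi : w i = 0
      · simp [hwi]
      · have h' : (d i * d i) * w i = lam * w i := by rw [mul_assoc]; exact hkey i
        have hdd : d i * d i = lam := mul_right_cancel₀ hwi h'
        have hsq : Real.sqrt lam = d i := by rw [← hdd, Real.sqrt_mul_self (hd i).le]
        rw [hsq]; ring
    have hsum : ∑ i, w i * (d i * w i) = Real.sqrt lam * ∑ i, w i * w i := by
      simp_rw [hterm]; rw [Finset.mul_sum]
    have h1 : lam = lam * ∑ i, w i * w i := by
      rw [Finset.mul_sum]
      calc lam = ∑ i, (d i * w i) * (d i * w i) := hlam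
        _ = ∑ i, lam * (w i * w i) := by
            refine Finset.sum_congr rfl fun i _ => ?_
            calc (d i * w i) * (d i * w i) = (d i * (d i * w i)) * w i := by ring
              _ = (lam * w i) * w i := by rw [hkey i]
              _ = lam * (w i * w i) := by ring
    have hnorm : ∑ i, w i * w i = 1 := by
      have h1' : lam * 1 = lam * ∑ i, w i * w i := by rw [mul_one]; exact h1
      exact (mul_left_cancel₀ (ne_of_gt hpos) h1').symm
    rw [hsum, hnorm, mul_one]

/-- Decompose the SVD of `Y` as `Y = U₀Σ₀V₀ᵀ + U₁Σ₁V₁ᵀ`, singular values `> τ`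
in the first block and `≤ τ` in the second. With `X̂ = U₀(Σ₀ - τI)V₀ᵀ = D_τ(Y)` and
`W = τ⁻¹U₁Σ₁V₁ᵀ`, one has `U₀ᵀW = 0`, `WV₀ = 0`, `‖W‖₂ ≤ 1`, and
`Y - X̂ = τ(U₀V₀ᵀ + W) ∈ τ·∂‖X̂‖_*`. -/
theorem shrinkage_subgradient (n₁ n₂ r₀ r₁ : ℕ) (τ : ℝ) (hτ : 0 < τ)
    (U₀ : Matrix (Fin n₁) (Fin r₀) ℝ) (V₀ : Matrix (Fin n₂) (Fin r₀) ℝ) (σ₀ : Fin r₀ → ℝ)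
    (U₁ : Matrix (Fin n₁) (Fin r₁) ℝ) (V₁ : Matrix (Fin n₂) (Fin r₁) ℝ) (σ₁ : Fin r₁ → ℝ)
    (hσ₀ : ∀ i, τ < σ₀ i) (hσ₁ : ∀ i, 0 < σ₁ i ∧ σ₁ i ≤ τ)
    (hU₀ : U₀ᵀ * U₀ = 1) (hU₁ : U₁ᵀ * U₁ = 1) (hU01 : U₀ᵀ * U₁ = 0)
    (hV₀ : V₀ᵀ * V₀ = 1) (hV₁ : V₁ᵀ * V₁ = 1) (hV01 : V₀ᵀ * V₁ = 0)
    (Y : Matrix (Fin n₁) (Fin n₂) ℝ)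
    (hY : Y = U₀ * Matrix.diagonal σ₀ * V₀ᵀ + U₁ * Matrix.diagonal σ₁ * V₁ᵀ)
    (Xhat W : Matrix (Fin n₁) (Fin n₂) ℝ)
    (hXhat : Xhat = U₀ * Matrix.diagonal (fun i => σ₀ i - τ) * V₀ᵀ)
    (hW : W = τ⁻¹ • (U₁ * Matrix.diagonal σ₁ * V₁ᵀ)) :
    U₀ᵀ * W = 0 ∧ W * V₀ = 0 ∧ specNorm W ≤ 1 ∧
    Y - Xhat = τ • (U₀ * V₀ᵀ + W) ∧
    IsSubgradAt nuclearNorm (U₀ * V₀ᵀ + W) Xhat := by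
  have hτ' : τ ≠ 0 := ne_of_gt hτ
  have h1 : U₀ᵀ * W = 0 := by
    rw [hW, Matrix.mul_smul, ← Matrix.mul_assoc, ← Matrix.mul_assoc, hU01,
      Matrix.zero_mul, Matrix.zero_mul, smul_zero]
  have hV10 : V₁ᵀ * V₀ = 0 := by
    have := congrArg Matrix.transpose hV01
    simpa [Matrix.transpose_mul] using this
  have h2 : W * V₀ = 0 := by
    rw [hW, Matrix.smul_mul, Matrix.mul_assoc (U₁ * Matrix.diagonal σ₁) V₁ᵀ V₀, hV10,
      Matrix.mul_zero, smul_zero]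
  have hprojV : ∀ v : Fin n₂ → ℝ,
      (V₀ᵀ *ᵥ v) ⬝ᵥ (V₀ᵀ *ᵥ v) + (V₁ᵀ *ᵥ v) ⬝ᵥ (V₁ᵀ *ᵥ v) ≤ v ⬝ᵥ v :=
    proj_bound V₀ V₁ hV₀ hV₁ hV01
  have hWv : ∀ v : Fin n₂ → ℝ,
      (W *ᵥ v) ⬝ᵥ (W *ᵥ v) ≤ (V₁ᵀ *ᵥ v) ⬝ᵥ (V₁ᵀ *ᵥ v) := by
    intro v
    have hWv1 : W *ᵥ v = τ⁻¹ • (U₁ *ᵥ (Matrix.diagonal σ₁ *ᵥ (V₁ᵀ *ᵥ v))) := by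
      rw [hW, Matrix.smul_mulVec, Matrix.mulVec_mulVec, Matrix.mulVec_mulVec]
    rw [hWv1, smul_dotProduct, dotProduct_smul, dot_mulVec_self U₁ hU₁]
    set b := V₁ᵀ *ᵥ v with hb
    have hdd : (Matrix.diagonal σ₁ *ᵥ b) ⬝ᵥ (Matrix.diagonal σ₁ *ᵥ b)
        = ∑ i, (σ₁ i * b i) * (σ₁ i * b i) := by
      simp [dotProduct, Matrix.mulVec_diagonal]
    rw [hdd, smul_eq_mul, smul_eq_mul]
    have hbb : b ⬝ᵥ b = ∑ i, b i * b i := rfl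
    rw [hbb, Finset.mul_sum, Finset.mul_sum]
    refine Finset.sum_le_sum fun i _ => ?_
    obtain ⟨hp, hle⟩ := hσ₁ i
    have ht : 0 < τ⁻¹ := inv_pos.mpr hτ
    have hts : τ⁻¹ * σ₁ i ≤ 1 := by
      rw [← mul_inv_cancel₀ hτ', mul_comm τ τ⁻¹]
      exact mul_le_mul_of_nonneg_left hle ht.le
    have hts0 : 0 ≤ τ⁻¹ * σ₁ i := mul_nonneg ht.le hp.le
    have key : (τ⁻¹ * σ₁ i) * (τ⁻¹ * σ₁ i) ≤ 1 := by nlinarith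
    calc τ⁻¹ * (τ⁻¹ * ((σ₁ i * b i) * (σ₁ i * b i)))
        = ((τ⁻¹ * σ₁ i) * (τ⁻¹ * σ₁ i)) * (b i * b i) := by ring
      _ ≤ 1 * (b i * b i) := mul_le_mul_of_nonneg_right key (mul_self_nonneg _)
      _ = b i * b i := one_mul _
  have hWQF : ∀ v : Fin n₂ → ℝ, (W *ᵥ v) ⬝ᵥ (W *ᵥ v) ≤ v ⬝ᵥ v := by
    intro v
    refine (hWv v).trans (le_trans ?_ (hprojV v))
    exact le_add_of_nonneg_left (dot_self_nonneg _)
  have h3 : specNorm W ≤ 1 := by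
    rw [specNorm]
    rcases isEmpty_or_nonempty (Fin n₂) with he | hne
    · rw [Real.iSup_of_isEmpty]; norm_num
    · exact ciSup_le fun j => singVal_le_one W hWQF j
  have hτW : τ • W = U₁ * Matrix.diagonal σ₁ * V₁ᵀ := by
    rw [hW, smul_smul, mul_inv_cancel₀ hτ', one_smul]
  have hdiag : Matrix.diagonal σ₀ - Matrix.diagonal (fun i => σ₀ i - τ)
      = τ • (1 : Matrix (Fin r₀) (Fin r₀) ℝ) := by
    ext i k
    by_cases h : i = k
    · subst h
      simp [Matrix.sub_apply, Matrix.diagonal_apply_eq, Matrix.smul_apply, Matrix.one_apply_eq]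
    · simp [Matrix.sub_apply, Matrix.diagonal_apply_ne _ h, Matrix.smul_apply,
        Matrix.one_apply_ne h]
  have h4 : Y - Xhat = τ • (U₀ * V₀ᵀ + W) := by
    rw [hY, hXhat, smul_add, hτW]
    have hmain : U₀ * Matrix.diagonal σ₀ * V₀ᵀ - U₀ * Matrix.diagonal (fun i => σ₀ i - τ) * V₀ᵀ
        = τ • (U₀ * V₀ᵀ) := by
      rw [← Matrix.sub_mul, ← Matrix.mul_sub, hdiag, Matrix.mul_smul, Matrix.mul_one,
        Matrix.smul_mul]
    rw [← hmain]
    abel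
  have hZQF : ∀ v : Fin n₂ → ℝ,
      ((U₀ * V₀ᵀ + W) *ᵥ v) ⬝ᵥ ((U₀ * V₀ᵀ + W) *ᵥ v) ≤ v ⬝ᵥ v := by
    intro v
    have hsplit : (U₀ * V₀ᵀ + W) *ᵥ v = U₀ *ᵥ (V₀ᵀ *ᵥ v) + W *ᵥ v := by
      rw [Matrix.add_mulVec, Matrix.mulVec_mulVec]
    set a := V₀ᵀ *ᵥ v with ha
    have hcross : (U₀ *ᵥ a) ⬝ᵥ (W *ᵥ v) = 0 := by
      rw [mulVec_dot_mulVec, h1, Matrix.zero_mulVec, dotProduct_zero]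
    have hcross' : (W *ᵥ v) ⬝ᵥ (U₀ *ᵥ a) = 0 := by rw [dotProduct_comm, hcross]
    have hUa : (U₀ *ᵥ a) ⬝ᵥ (U₀ *ᵥ a) = a ⬝ᵥ a := dot_mulVec_self U₀ hU₀ a
    have expand : ((U₀ * V₀ᵀ + W) *ᵥ v) ⬝ᵥ ((U₀ * V₀ᵀ + W) *ᵥ v)
        = a ⬝ᵥ a + (W *ᵥ v) ⬝ᵥ (W *ᵥ v) := by
      rw [hsplit]
      simp only [add_dotProduct, dotProduct_add, hUa, hcross, hcross']
      ring
    rw [expand]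
    calc a ⬝ᵥ a + (W *ᵥ v) ⬝ᵥ (W *ᵥ v)
        ≤ a ⬝ᵥ a + (V₁ᵀ *ᵥ v) ⬝ᵥ (V₁ᵀ *ᵥ v) := add_le_add_right (hWv v) _
      _ ≤ v ⬝ᵥ v := hprojV v
  have hWU : Wᵀ * U₀ = 0 := by
    have := congrArg Matrix.transpose h1
    simpa [Matrix.transpose_mul] using this
  have hZX : (U₀ * V₀ᵀ + W)ᵀ * (U₀ * Matrix.diagonal (fun i => σ₀ i - τ) * V₀ᵀ)
      = V₀ * Matrix.diagonal (fun i => σ₀ i - τ) * V₀ᵀ := by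
    rw [Matrix.transpose_add, Matrix.transpose_mul, Matrix.transpose_transpose, Matrix.add_mul]
    have hWX : Wᵀ * (U₀ * Matrix.diagonal (fun i => σ₀ i - τ) * V₀ᵀ) = 0 := by
      rw [Matrix.mul_assoc U₀ _ V₀ᵀ, ← Matrix.mul_assoc, hWU, Matrix.zero_mul]
    have hUX : V₀ᵀᵀ * U₀ᵀ * (U₀ * Matrix.diagonal (fun i => σ₀ i - τ) * V₀ᵀ)
        = V₀ * Matrix.diagonal (fun i => σ₀ i - τ) * V₀ᵀ := by
      rw [Matrix.transpose_transpose]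
      calc V₀ * U₀ᵀ * (U₀ * Matrix.diagonal (fun i => σ₀ i - τ) * V₀ᵀ)
          = V₀ * ((U₀ᵀ * U₀) * (Matrix.diagonal (fun i => σ₀ i - τ) * V₀ᵀ)) := by
            simp only [Matrix.mul_assoc]
        _ = V₀ * Matrix.diagonal (fun i => σ₀ i - τ) * V₀ᵀ := by
            rw [hU₀, Matrix.one_mul, Matrix.mul_assoc]
    rw [hWX, add_zero]
    simpa using hUX
  have hd : ∀ i, 0 < σ₀ i - τ := fun i => sub_pos.mpr (hσ₀ i)
  have h5 : IsSubgradAt nuclearNorm (U₀ * V₀ᵀ + W) Xhat := by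
    intro X
    have key1 : mInner (U₀ * V₀ᵀ + W) X ≤ nuclearNorm X :=
      mInner_le_nuclearNorm (U₀ * V₀ᵀ + W) X hZQF
    have key2 : nuclearNorm Xhat ≤ mInner (U₀ * V₀ᵀ + W) Xhat := by
      rw [hXhat]
      exact nuclearNorm_le_mInner U₀ V₀ (fun i => σ₀ i - τ) hd hU₀ hV₀ (U₀ * V₀ᵀ + W) hZX
    have lin : mInner (U₀ * V₀ᵀ + W) (X - Xhat)
        = mInner (U₀ * V₀ᵀ + W) X - mInner (U₀ * V₀ᵀ + W) Xhat := by
      simp [mInner, Matrix.sub_apply, mul_sub, Finset.sum_sub_distrib]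
    rw [lin]
    linarith
  exact ⟨h1, h2, h3, h4, h5⟩
end

section
/- For any matrix Y ∈ ℝ^{n₁×n₂}, fixed τ > 0, fixed M ∈ ℝ^{n₁×n₂}, and sampled set Ω, the minimizer over X of f_τ(X) + ⟨Y, P_Ω(M − X)⟩ coincides with the minimizer over X of τ‖X‖_* + (1/2)‖X − P_Ω(Y)‖_F², and hence equals D_τ(P_Ω(Y)). -/
open Matrix Filter Topology

private lemma rep_inner {n₁ n₂ r₁ r₂ : ℕ}
    (c : Fin r₁ → ℝ) (u : Fin r₁ → Fin n₁ → ℝ) (v : Fin r₁ → Fin n₂ → ℝ)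
    (s : Fin r₂ → ℝ) (p : Fin r₂ → Fin n₁ → ℝ) (q : Fin r₂ → Fin n₂ → ℝ) :
    (∑ a, ∑ b, (∑ i, c i * u i a * v i b) * (∑ j, s j * p j a * q j b)) =
      ∑ i, ∑ j, c i * s j * ((∑ a, u i a * p j a) * (∑ b, v i b * q j b)) := by
  set F : Fin r₁ → Fin r₂ → Fin n₁ → Fin n₂ → ℝ :=
    fun i j a b => c i * s j * (u i a * p j a) * (v i b * q j b) with hF
  calc (∑ a, ∑ b, (∑ i, c i * u i a * v i b) * (∑ j, s j * p j a * q j b))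
      = ∑ a, ∑ b, ∑ i, ∑ j, F i j a b := by
        refine Finset.sum_congr rfl fun a _ => Finset.sum_congr rfl fun b _ => ?_
        rw [Finset.sum_mul_sum]
        exact Finset.sum_congr rfl fun i _ => Finset.sum_congr rfl fun j _ => by
          simp only [hF]; ring
    _ = ∑ a, ∑ i, ∑ b, ∑ j, F i j a b :=
        Finset.sum_congr rfl fun a _ => Finset.sum_comm
    _ = ∑ a, ∑ i, ∑ j, ∑ b, F i j a b :=
        Finset.sum_congr rfl fun a _ => Finset.sum_congr rfl fun i _ => Finset.sum_comm
    _ = ∑ i, ∑ a, ∑ j, ∑ b, F i j a b := Finset.sum_comm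
    _ = ∑ i, ∑ j, ∑ a, ∑ b, F i j a b :=
        Finset.sum_congr rfl fun i _ => Finset.sum_comm
    _ = ∑ i, ∑ j, c i * s j * ((∑ a, u i a * p j a) * (∑ b, v i b * q j b)) := by
        refine Finset.sum_congr rfl fun i _ => Finset.sum_congr rfl fun j _ => ?_
        rw [Finset.sum_mul_sum (s := (Finset.univ : Finset (Fin n₁)))
          (t := (Finset.univ : Finset (Fin n₂))) (f := fun a => u i a * p j a)
          (g := fun b => v i b * q j b), Finset.mul_sum]
        refine Finset.sum_congr rfl fun a _ => ?_
        rw [Finset.mul_sum]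
        exact Finset.sum_congr rfl fun b _ => by simp only [hF]; ring

private lemma bessel {m n : ℕ} (p : Fin m → Fin n → ℝ) (ε : Fin m → ℝ)
    (hε : ∀ i, ε i = 0 ∨ ε i = 1) (h0 : ∀ i, ε i = 0 → ∀ k, p i k = 0)
    (hgram : ∀ i j, (∑ k, p i k * p j k) = if i = j then ε i else 0)
    (x : Fin n → ℝ) : ∑ i, (∑ k, p i k * x k) ^ 2 ≤ ∑ k, x k ^ 2 := by
  set z : Fin m → ℝ := fun i => ∑ k, p i k * x k with hz
  set w : Fin n → ℝ := fun k => ∑ i, z i * p i k with hw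
  have hww : ∑ k, w k ^ 2 = ∑ i, z i ^ 2 := by
    have : ∑ k, w k ^ 2 = ∑ i, ∑ j, z i * z j * (∑ k, p i k * p j k) := by
      simp only [hw, pow_two, Finset.sum_mul, Finset.mul_sum]
      rw [Finset.sum_comm (γ := Fin n) (α := Fin m) (β := ℝ)]
      refine Finset.sum_congr rfl fun i _ => ?_
      rw [Finset.sum_comm (γ := Fin n) (α := Fin m) (β := ℝ)]
      refine Finset.sum_congr rfl fun j _ => Finset.sum_congr rfl fun k _ => by ring
    rw [this]
    refine Finset.sum_congr rfl fun i _ => ?_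
    rw [Finset.sum_eq_single i]
    · rw [hgram i i, if_pos rfl]
      rcases hε i with h | h
      · have : z i = 0 := by simp [hz, h0 i h]
        simp [this, h]
      · simp [h, pow_two]
    · intro j _ hj
      rw [hgram i j, if_neg (Ne.symm hj)]; ring
    · intro h; exact absurd (Finset.mem_univ i) h
  have hwx : ∑ k, w k * x k = ∑ i, z i ^ 2 := by
    simp only [hw, Finset.sum_mul]
    rw [Finset.sum_comm (γ := Fin n) (α := Fin m) (β := ℝ)]
    refine Finset.sum_congr rfl fun i _ => ?_
    simp only [pow_two, hz, Finset.mul_sum]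
    exact Finset.sum_congr rfl fun k _ => by ring
  have hcs := Finset.sum_mul_sq_le_sq_mul_sq Finset.univ w x
  rw [hwx, hww] at hcs
  have hZ : 0 ≤ ∑ i, z i ^ 2 := Finset.sum_nonneg fun i _ => sq_nonneg _
  rcases eq_or_lt_of_le hZ with h | h
  · rw [← h]; exact Finset.sum_nonneg fun k _ => sq_nonneg _
  · nlinarith [hcs]

private lemma holder_key {n₁ n₂ r₁ r₂ : ℕ} (B : ℝ) (hB : 0 ≤ B)
    (c : Fin r₁ → ℝ) (u : Fin r₁ → Fin n₁ → ℝ) (v : Fin r₁ → Fin n₂ → ℝ)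
    (s : Fin r₂ → ℝ) (p : Fin r₂ → Fin n₁ → ℝ) (q : Fin r₂ → Fin n₂ → ℝ)
    (hc : ∀ i, 0 ≤ c i ∧ c i ≤ B) (hs : ∀ j, 0 ≤ s j)
    (hu : ∀ x : Fin n₁ → ℝ, ∑ i, (∑ k, u i k * x k) ^ 2 ≤ ∑ k, x k ^ 2)
    (hv : ∀ x : Fin n₂ → ℝ, ∑ i, (∑ k, v i k * x k) ^ 2 ≤ ∑ k, x k ^ 2)
    (hp : ∀ j, ∑ k, p j k ^ 2 ≤ 1) (hq : ∀ j, ∑ k, q j k ^ 2 ≤ 1) :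
    (∑ a, ∑ b, (∑ i, c i * u i a * v i b) * (∑ j, s j * p j a * q j b)) ≤ B * ∑ j, s j := by
  rw [rep_inner]
  have hsw : (∑ i, ∑ j, c i * s j * ((∑ a, u i a * p j a) * (∑ b, v i b * q j b)))
      = ∑ j, ∑ i, c i * s j * ((∑ a, u i a * p j a) * (∑ b, v i b * q j b)) :=
    Finset.sum_comm
  rw [hsw, Finset.mul_sum]
  refine Finset.sum_le_sum fun j _ => ?_
  -- goal: ∑ i, c i * s j * ((∑ a, u i a * p j a) * (∑ b, v i b * q j b)) ≤ B * s j
  set α : Fin r₁ → ℝ := fun i => ∑ a, u i a * p j a with hα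
  set β : Fin r₁ → ℝ := fun i => ∑ b, v i b * q j b with hβ
  have h1 : ∑ i, c i * s j * (α i * β i) ≤ ∑ i, s j * (B * (|α i| * |β i|)) := by
    refine Finset.sum_le_sum fun i _ => ?_
    have : c i * (α i * β i) ≤ B * (|α i| * |β i|) := by
      calc c i * (α i * β i) ≤ c i * |α i * β i| :=
            mul_le_mul_of_nonneg_left (le_abs_self _) (hc i).1
        _ ≤ B * |α i * β i| := mul_le_mul_of_nonneg_right (hc i).2 (abs_nonneg _)
        _ = B * (|α i| * |β i|) := by rw [abs_mul]
    calc c i * s j * (α i * β i) = s j * (c i * (α i * β i)) := by ring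
      _ ≤ s j * (B * (|α i| * |β i|)) := mul_le_mul_of_nonneg_left this (hs j)
  have h2 : ∑ i, |α i| * |β i| ≤ 1 := by
    have hcs := Finset.sum_mul_sq_le_sq_mul_sq Finset.univ (fun i => |α i|) (fun i => |β i|)
    have hA : ∑ i, |α i| ^ 2 ≤ 1 := by
      calc ∑ i, |α i| ^ 2 = ∑ i, α i ^ 2 := by simp [sq_abs]
        _ ≤ ∑ k, p j k ^ 2 := hu (p j)
        _ ≤ 1 := hp j
    have hB : ∑ i, |β i| ^ 2 ≤ 1 := by
      calc ∑ i, |β i| ^ 2 = ∑ i, β i ^ 2 := by simp [sq_abs]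
        _ ≤ ∑ k, q j k ^ 2 := hv (q j)
        _ ≤ 1 := hq j
    have hnn : (0:ℝ) ≤ ∑ i, |α i| * |β i| :=
      Finset.sum_nonneg fun i _ => mul_nonneg (abs_nonneg _) (abs_nonneg _)
    nlinarith [hcs, hA, hB, Finset.sum_nonneg (fun i (_ : i ∈ Finset.univ) => sq_nonneg (|α i|)),
      Finset.sum_nonneg (fun i (_ : i ∈ Finset.univ) => sq_nonneg (|β i|))]
  have hBnn : 0 ≤ B := hB
  calc ∑ i, c i * s j * (α i * β i) ≤ ∑ i, s j * (B * (|α i| * |β i|)) := h1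
    _ = s j * (B * ∑ i, |α i| * |β i|) := by
        rw [Finset.mul_sum, Finset.mul_sum]
    _ ≤ s j * (B * 1) := by
        apply mul_le_mul_of_nonneg_left _ (hs j)
        exact mul_le_mul_of_nonneg_left h2 hBnn
    _ = B * s j := by ring

private lemma sq_singVal {n₁ n₂ : ℕ} (X : Matrix (Fin n₁) (Fin n₂) ℝ) (j : Fin n₂) :
    singVal X j ^ 2 = (Matrix.isHermitian_conjTranspose_mul_self X).eigenvalues j := by
  have hP : (Xᵀ * X).PosSemidef := by
    rw [← Matrix.conjTranspose_eq_transpose_of_trivial]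
    exact Matrix.posSemidef_conjTranspose_mul_self X
  exact Real.sq_sqrt (hP.eigenvalues_nonneg j)

private lemma singVal_nonneg {n₁ n₂ : ℕ} (X : Matrix (Fin n₁) (Fin n₂) ℝ) (j : Fin n₂) :
    0 ≤ singVal X j := Real.sqrt_nonneg _

private lemma svd_package {n₁ n₂ : ℕ} (X : Matrix (Fin n₁) (Fin n₂) ℝ) :
    ∃ (p : Fin n₂ → Fin n₁ → ℝ) (q : Fin n₂ → Fin n₂ → ℝ),
      (∀ i j, (∑ k, p i k * p j k) = if i = j then (if singVal X i = 0 then 0 else 1) else 0) ∧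
      (∀ j, singVal X j = 0 → ∀ k, p j k = 0) ∧
      (∀ i j, (∑ k, q i k * q j k) = if i = j then 1 else 0) ∧
      (∀ a b, X a b = ∑ j, singVal X j * p j a * q j b) := by
  classical
  set H := Matrix.isHermitian_conjTranspose_mul_self X with hH
  set q : Fin n₂ → Fin n₂ → ℝ := fun j k => H.eigenvectorBasis j k with hq
  have hqq : ∀ i j, (∑ k, q i k * q j k) = if i = j then 1 else 0 := by
    intro i j
    have h := orthonormal_iff_ite.mp H.eigenvectorBasis.orthonormal i j
    simp [PiLp.inner_apply, RCLike.inner_apply, conj_trivial, mul_comm] at h; exact h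
  have heig : ∀ j k, ∑ l, (Xᵀ * X) k l * q j l = H.eigenvalues j * q j k := by
    intro j k
    have h := congrFun (H.mulVec_eigenvectorBasis j) k
    simp [Matrix.mulVec, dotProduct] at h; exact h
  have expand : ∀ (y z : Fin n₂ → ℝ), (∑ a, (∑ k, X a k * y k) * (∑ l, X a l * z l)) =
      ∑ k, ∑ l, (y k * z l) * ∑ a, X a k * X a l := by
    intro y z
    calc (∑ a, (∑ k, X a k * y k) * (∑ l, X a l * z l))
        = ∑ a, ∑ k, ∑ l, (y k * z l) * (X a k * X a l) := by
          refine Finset.sum_congr rfl fun a _ => ?_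
          rw [Finset.sum_mul_sum]
          exact Finset.sum_congr rfl fun k _ => Finset.sum_congr rfl fun l _ => by ring
      _ = ∑ k, ∑ a, ∑ l, (y k * z l) * (X a k * X a l) := Finset.sum_comm
      _ = ∑ k, ∑ l, ∑ a, (y k * z l) * (X a k * X a l) :=
          Finset.sum_congr rfl fun k _ => Finset.sum_comm
      _ = ∑ k, ∑ l, (y k * z l) * ∑ a, X a k * X a l := by
          refine Finset.sum_congr rfl fun k _ => Finset.sum_congr rfl fun l _ => ?_
          rw [Finset.mul_sum]
  have hXq : ∀ i j, (∑ a, (∑ k, X a k * q i k) * (∑ l, X a l * q j l)) =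
      if i = j then singVal X j ^ 2 else 0 := by
    intro i j
    have step : (∑ a, (∑ k, X a k * q i k) * (∑ l, X a l * q j l)) =
        ∑ k, q i k * (∑ l, (Xᵀ * X) k l * q j l) := by
      rw [expand (q i) (q j)]
      refine Finset.sum_congr rfl fun k _ => ?_
      rw [Finset.mul_sum]
      refine Finset.sum_congr rfl fun l _ => ?_
      simp only [Matrix.mul_apply, Matrix.transpose_apply]
      ring
    rw [step]
    have h2 : ∑ k, q i k * (∑ l, (Xᵀ * X) k l * q j l) = H.eigenvalues j * ∑ k, q i k * q j k := by
      rw [Finset.mul_sum]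
      refine Finset.sum_congr rfl fun k _ => ?_
      rw [heig j k]; ring
    rw [h2, hqq i j, sq_singVal]
    by_cases h : i = j <;> simp [h]
  set p : Fin n₂ → Fin n₁ → ℝ :=
    fun j a => if singVal X j = 0 then 0 else (singVal X j)⁻¹ * (∑ k, X a k * q j k) with hp
  have hXq0 : ∀ j, singVal X j = 0 → ∀ a, (∑ k, X a k * q j k) = 0 := by
    intro j h a
    have h2 := hXq j j
    rw [if_pos rfl, h] at h2
    have hz : (∑ a, (∑ k, X a k * q j k) ^ 2) = 0 := by
      simpa [pow_two] using h2
    have := (Finset.sum_eq_zero_iff_of_nonneg (fun a _ => sq_nonneg _)).mp hz a (Finset.mem_univ a)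
    exact pow_eq_zero_iff (n := 2) (by norm_num) |>.mp this
  have hp0 : ∀ j, singVal X j = 0 → ∀ k, p j k = 0 := by
    intro j h k; simp [hp, h]
  have hsp : ∀ j a, singVal X j * p j a = ∑ k, X a k * q j k := by
    intro j a
    by_cases h : singVal X j = 0
    · rw [hXq0 j h a, h, hp0 j h a, mul_zero]
    · simp only [hp, if_neg h]
      field_simp
  refine ⟨p, q, ?_, hp0, hqq, ?_⟩
  · intro i j
    by_cases hi : singVal X i = 0
    · rw [Finset.sum_eq_zero fun k _ => by rw [hp0 i hi k, zero_mul]]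
      by_cases h : i = j
      · subst h; simp [hi]
      · simp [h]
    · by_cases hj : singVal X j = 0
      · have hne : i ≠ j := fun h => hi (h ▸ hj)
        rw [Finset.sum_eq_zero fun k _ => by rw [hp0 j hj k, mul_zero]]
        simp [hne]
      · have key : (∑ k, p i k * p j k) =
            (singVal X i)⁻¹ * (singVal X j)⁻¹ * (if i = j then singVal X j ^ 2 else 0) := by
          rw [← hXq i j, Finset.mul_sum]
          refine Finset.sum_congr rfl fun a _ => ?_
          simp only [hp, if_neg hi, if_neg hj]
          ring
        rw [key]
        by_cases h : i = j
        · subst h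
          rw [if_pos rfl, if_pos rfl, if_neg hi, pow_two]
          field_simp
        · simp [h]
  · intro a b
    have hcomp : ∀ c b, (∑ j, q j c * q j b) = if c = b then 1 else 0 := by
      set Q : Matrix (Fin n₂) (Fin n₂) ℝ := Matrix.of (fun c j => q j c) with hQ
      have h1 : Qᵀ * Q = 1 := by
        ext i j
        rw [Matrix.mul_apply]
        simpa [hQ, Matrix.one_apply] using hqq i j
      have h2 : Q * Qᵀ = 1 := mul_eq_one_comm.mp h1
      intro c b
      have h3 := congrFun (congrFun h2 c) b
      rw [Matrix.mul_apply] at h3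
      simpa [hQ, Matrix.one_apply] using h3
    calc X a b = ∑ c, X a c * (if c = b then 1 else 0) := by simp
      _ = ∑ c, X a c * (∑ j, q j c * q j b) := by
          refine Finset.sum_congr rfl fun c _ => by rw [hcomp c b]
      _ = ∑ j, (∑ c, X a c * q j c) * q j b := by
          simp only [Finset.mul_sum]
          rw [Finset.sum_comm (γ := Fin n₂) (α := Fin n₂) (β := ℝ)]
          exact Finset.sum_congr rfl fun j _ =>
            (by rw [Finset.sum_mul]; exact Finset.sum_congr rfl fun c _ => by ring)
      _ = ∑ j, singVal X j * p j a * q j b := by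
          refine Finset.sum_congr rfl fun j _ => ?_
          rw [← hsp j a]

private lemma frob_sq {n₁ n₂ : ℕ} (Z : Matrix (Fin n₁) (Fin n₂) ℝ) :
    frob Z ^ 2 = ∑ i, ∑ j, (Z i j) ^ 2 :=
  Real.sq_sqrt (Finset.sum_nonneg fun i _ => Finset.sum_nonneg fun j _ => sq_nonneg _)

private lemma UDV_apply {n₁ n₂ r : ℕ} (U : Matrix (Fin n₁) (Fin r) ℝ) (d : Fin r → ℝ)
    (V : Matrix (Fin n₂) (Fin r) ℝ) (a : Fin n₁) (b : Fin n₂) :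
    (U * Matrix.diagonal d * Vᵀ) a b = ∑ i, d i * U a i * V b i := by
  rw [Matrix.mul_apply]
  exact Finset.sum_congr rfl fun i _ => by
    rw [Matrix.mul_diagonal, Matrix.transpose_apply]; ring

private lemma col_gram {n r : ℕ} (U : Matrix (Fin n) (Fin r) ℝ) (hU : Uᵀ * U = 1) (i j : Fin r) :
    ∑ k, U k i * U k j = if i = j then 1 else 0 := by
  have h := congrFun (congrFun hU i) j
  rw [Matrix.mul_apply] at h
  simpa [Matrix.transpose_apply, Matrix.one_apply] using h

private lemma scalar1 (x t : ℝ) : x - max (x - t) 0 = min x t := by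
  rcases le_total x t with h | h
  · rw [max_eq_right (by linarith), min_eq_left h]; ring
  · rw [max_eq_left (by linarith), min_eq_right h]; ring

private lemma scalar2 (x t : ℝ) : min x t * max (x - t) 0 = t * max (x - t) 0 := by
  rcases le_total x t with h | h
  · rw [max_eq_right (by linarith)]; ring
  · rw [min_eq_right h]

/-- For any `Y`, `τ > 0`, `M` and sampled set `Ω`, the minimizers of
`X ↦ f_τ(X) + ⟨Y, P_Ω(M - X)⟩` coincide with the minimizers of
`X ↦ τ‖X‖_* + (1/2)‖X - P_Ω(Y)‖_F²`, and the (unique) minimizer is `D_τ(P_Ω(Y))`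
(expressed through a reduced SVD of `P_Ω(Y)`). -/
theorem lagrangian_minimizer_is_shrinkage (n₁ n₂ r : ℕ) (τ : ℝ) (hτ : 0 < τ)
    (Ω : Finset (Fin n₁ × Fin n₂)) (M Y : Matrix (Fin n₁) (Fin n₂) ℝ)
    (U : Matrix (Fin n₁) (Fin r) ℝ) (V : Matrix (Fin n₂) (Fin r) ℝ) (σ : Fin r → ℝ)
    (hσ : ∀ i, 0 < σ i) (hU : Uᵀ * U = 1) (hV : Vᵀ * V = 1)
    (hSVD : projSet Ω Y = U * Matrix.diagonal σ * Vᵀ)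
    (D : Matrix (Fin n₁) (Fin n₂) ℝ)
    (hD : D = U * Matrix.diagonal (fun i => max (σ i - τ) 0) * Vᵀ) :
    (∀ X₀ : Matrix (Fin n₁) (Fin n₂) ℝ,
      IsMinOn (fun X => ftau τ X + mInner Y (projSet Ω (M - X))) Set.univ X₀ ↔
      IsMinOn (fun X => τ * nuclearNorm X + (1 / 2) * frob (X - projSet Ω Y) ^ 2)
        Set.univ X₀) ∧
    IsMinOn (fun X => ftau τ X + mInner Y (projSet Ω (M - X))) Set.univ D ∧
    (∀ X₀ : Matrix (Fin n₁) (Fin n₂) ℝ,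
      IsMinOn (fun X => ftau τ X + mInner Y (projSet Ω (M - X))) Set.univ X₀ → X₀ = D) := by
  classical
  set A := projSet Ω Y with hA
  have hftau : ∀ Z : Matrix (Fin n₁) (Fin n₂) ℝ,
      ftau τ Z = τ * nuclearNorm Z + (1/2) * frob Z ^ 2 := fun _ => rfl
  have hmI : ∀ P Q : Matrix (Fin n₁) (Fin n₂) ℝ,
      mInner P Q = ∑ a, ∑ b, P a b * Q a b := fun _ _ => rfl
  have hAab : ∀ a b, A a b = ∑ i, σ i * U a i * V b i := fun a b => by
    rw [hSVD]; exact UDV_apply U σ V a b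
  have hDab : ∀ a b, D a b = ∑ i, max (σ i - τ) 0 * U a i * V b i := fun a b => by
    rw [hD]; exact UDV_apply U _ V a b
  have hWab : ∀ a b, A a b - D a b = ∑ i, min (σ i) τ * U a i * V b i := by
    intro a b
    rw [hAab a b, hDab a b, ← Finset.sum_sub_distrib]
    exact Finset.sum_congr rfl fun i _ => by rw [← scalar1 (σ i) τ]; ring
  have hUg := col_gram U hU
  have hVg := col_gram V hV
  have hu : ∀ x : Fin n₁ → ℝ, ∑ i, (∑ k, U k i * x k)^2 ≤ ∑ k, x k ^2 :=
    bessel (fun i k => U k i) (fun _ => 1) (fun _ => Or.inr rfl)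
      (fun _ h => absurd h one_ne_zero) (fun i j => by simpa using hUg i j)
  have hv : ∀ x : Fin n₂ → ℝ, ∑ i, (∑ k, V k i * x k)^2 ≤ ∑ k, x k ^2 :=
    bessel (fun i k => V k i) (fun _ => 1) (fun _ => Or.inr rfl)
      (fun _ h => absurd h one_ne_zero) (fun i j => by simpa using hVg i j)
  have hUcol : ∀ i, ∑ k, (U k i)^2 ≤ 1 := fun i =>
    le_of_eq (by simpa [pow_two] using hUg i i)
  have hVcol : ∀ i, ∑ k, (V k i)^2 ≤ 1 := fun i =>
    le_of_eq (by simpa [pow_two] using hVg i i)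
  have KEY1 : ∀ X' : Matrix (Fin n₁) (Fin n₂) ℝ,
      (∑ a, ∑ b, (A a b - D a b) * X' a b) ≤ τ * nuclearNorm X' := by
    intro X'
    obtain ⟨p, q, hpg, hp0, hqg, hrep⟩ := svd_package X'
    have hqb : ∀ j, ∑ k, (q j k)^2 ≤ 1 := fun j =>
      le_of_eq (by simpa [pow_two] using hqg j j)
    have hpb : ∀ j, ∑ k, (p j k)^2 ≤ 1 := by
      intro j
      have h := hpg j j
      rw [if_pos rfl] at h
      have h2 : ∑ k, (p j k)^2 = if singVal X' j = 0 then 0 else 1 := by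
        simpa [pow_two] using h
      rw [h2]; split <;> norm_num
    have hmain := holder_key τ hτ.le (fun i => min (σ i) τ) (fun i k => U k i)
      (fun i k => V k i) (singVal X') p q
      (fun i => ⟨le_min (hσ i).le hτ.le, min_le_right _ _⟩)
      (fun j => singVal_nonneg X' j) hu hv hpb hqb
    calc (∑ a, ∑ b, (A a b - D a b) * X' a b)
        = ∑ a, ∑ b, (∑ i, min (σ i) τ * U a i * V b i) *
            (∑ j, singVal X' j * p j a * q j b) := by
          refine Finset.sum_congr rfl fun a _ => Finset.sum_congr rfl fun b _ => ?_
          rw [← hWab a b, ← hrep a b]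
      _ ≤ τ * ∑ j, singVal X' j := hmain
      _ = τ * nuclearNorm X' := rfl
  have KEY2 : nuclearNorm D ≤ ∑ i, max (σ i - τ) 0 := by
    obtain ⟨p, q, hpg, hp0, hqg, hrep⟩ := svd_package D
    set ε : Fin n₂ → ℝ := fun j => if singVal D j = 0 then 0 else 1 with hε
    have hεb : ∀ j, ε j = 0 ∨ ε j = 1 := fun j => by
      by_cases h : singVal D j = 0 <;> simp [hε, h]
    have hε0 : ∀ j, ε j = 0 → ∀ k, p j k = 0 := by
      intro j h k
      by_cases hs : singVal D j = 0
      · exact hp0 j hs k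
      · simp [hε, hs] at h
    have hbp : ∀ x : Fin n₁ → ℝ, ∑ j, (∑ k, p j k * x k)^2 ≤ ∑ k, x k ^2 :=
      bessel p ε hεb hε0 (fun i j => by rw [hpg i j])
    have hbq : ∀ x : Fin n₂ → ℝ, ∑ j, (∑ k, q j k * x k)^2 ≤ ∑ k, x k ^2 :=
      bessel q (fun _ => 1) (fun _ => Or.inr rfl)
        (fun _ h => absurd h one_ne_zero) (fun i j => by simpa using hqg i j)
    have hmain := holder_key 1 zero_le_one ε p q
      (fun i => max (σ i - τ) 0) (fun i k => U k i) (fun i k => V k i)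
      (fun j => by rcases hεb j with h | h <;> rw [h] <;> norm_num)
      (fun i => le_max_right _ _) hbp hbq hUcol hVcol
    have hid : nuclearNorm D
        = ∑ a, ∑ b, (∑ j, ε j * p j a * q j b) *
            (∑ k, singVal D k * p k a * q k b) := by
      rw [rep_inner ε p q (singVal D) p q]
      refine (Finset.sum_congr rfl fun j _ => ?_).symm
      rw [Finset.sum_eq_single j]
      · rw [hpg j j, hqg j j]
        by_cases h : singVal D j = 0 <;> simp [hε, h]
      · intro k _ hk
        rw [hpg j k, if_neg (fun h : j = k => hk h.symm)]; ring
      · exact fun h => absurd (Finset.mem_univ j) h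
    have hfinal : nuclearNorm D = ∑ a, ∑ b, (∑ j, ε j * p j a * q j b) *
        (∑ i, max (σ i - τ) 0 * U a i * V b i) := by
      rw [hid]
      refine Finset.sum_congr rfl fun a _ => Finset.sum_congr rfl fun b _ => ?_
      rw [← hrep a b, ← hDab a b]
    calc nuclearNorm D = _ := hfinal
      _ ≤ 1 * ∑ i, max (σ i - τ) 0 := hmain
      _ = ∑ i, max (σ i - τ) 0 := one_mul _
  have KEY3 : (∑ a, ∑ b, (A a b - D a b) * D a b) = τ * ∑ i, max (σ i - τ) 0 := by
    have h1 : (∑ a, ∑ b, (A a b - D a b) * D a b)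
        = ∑ a, ∑ b, (∑ i, min (σ i) τ * U a i * V b i) *
            (∑ j, max (σ j - τ) 0 * U a j * V b j) := by
      refine Finset.sum_congr rfl fun a _ => Finset.sum_congr rfl fun b _ => ?_
      rw [← hWab a b, ← hDab a b]
    rw [h1, rep_inner (fun i => min (σ i) τ) (fun i k => U k i) (fun i k => V k i)
      (fun j => max (σ j - τ) 0) (fun j k => U k j) (fun j k => V k j), Finset.mul_sum]
    refine Finset.sum_congr rfl fun i _ => ?_
    rw [Finset.sum_eq_single i]
    · rw [hUg i i, hVg i i, if_pos rfl]; simp [scalar2]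
    · intro j _ hj
      rw [hUg i j, hVg i j, if_neg (fun h => hj h.symm)]; ring
    · exact fun h => absurd (Finset.mem_univ i) h
  have hquad : ∀ X' : Matrix (Fin n₁) (Fin n₂) ℝ,
      (∑ a, ∑ b, (X' a b - A a b)^2)
        = (∑ a, ∑ b, (D a b - A a b)^2) + (∑ a, ∑ b, (X' a b - D a b)^2)
          + 2 * (∑ a, ∑ b, (A a b - D a b) * D a b)
          - 2 * (∑ a, ∑ b, (A a b - D a b) * X' a b) := by
    intro X'
    calc (∑ a, ∑ b, (X' a b - A a b)^2)
        = ∑ a, ∑ b, ((D a b - A a b)^2 + (X' a b - D a b)^2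
            + 2 * ((A a b - D a b) * D a b) - 2 * ((A a b - D a b) * X' a b)) :=
          Finset.sum_congr rfl fun a _ => Finset.sum_congr rfl fun b _ => by ring
      _ = _ := by
          simp only [Finset.sum_add_distrib, Finset.sum_sub_distrib, ← Finset.mul_sum]
  have CORE : ∀ X' : Matrix (Fin n₁) (Fin n₂) ℝ,
      τ * nuclearNorm D + (1/2) * frob (D - A)^2 + (1/2) * frob (X' - D)^2
        ≤ τ * nuclearNorm X' + (1/2) * frob (X' - A)^2 := by
    intro X'
    have f1 : frob (X' - A)^2 = ∑ a, ∑ b, (X' a b - A a b)^2 := by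
      rw [frob_sq]
      exact Finset.sum_congr rfl fun a _ => Finset.sum_congr rfl fun b _ => by
        rw [Matrix.sub_apply]
    have f2 : frob (D - A)^2 = ∑ a, ∑ b, (D a b - A a b)^2 := by
      rw [frob_sq]
      exact Finset.sum_congr rfl fun a _ => Finset.sum_congr rfl fun b _ => by
        rw [Matrix.sub_apply]
    have f3 : frob (X' - D)^2 = ∑ a, ∑ b, (X' a b - D a b)^2 := by
      rw [frob_sq]
      exact Finset.sum_congr rfl fun a _ => Finset.sum_congr rfl fun b _ => by
        rw [Matrix.sub_apply]
    rw [f1, f2, f3, hquad X']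
    have h1 := KEY1 X'
    have h4 : τ * nuclearNorm D ≤ τ * ∑ i, max (σ i - τ) 0 :=
      mul_le_mul_of_nonneg_left KEY2 hτ.le
    linarith [KEY3]
  set C : ℝ := ∑ a, ∑ b, (Y a b * (projSet Ω M) a b - (1/2) * (A a b)^2) with hC
  have hconst : ∀ X' : Matrix (Fin n₁) (Fin n₂) ℝ,
      ftau τ X' + mInner Y (projSet Ω (M - X'))
        = (τ * nuclearNorm X' + (1/2) * frob (X' - A)^2) + C := by
    intro X'
    have entry : ∀ a b, Y a b * (projSet Ω (M - X')) a b + (1/2) * (X' a b)^2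
        = (1/2) * (X' a b - A a b)^2
          + (Y a b * (projSet Ω M) a b - (1/2) * (A a b)^2) := by
      intro a b
      simp only [hA, projSet, Matrix.of_apply, Matrix.sub_apply]
      by_cases h : (a, b) ∈ Ω
      · simp only [if_pos h]; ring
      · simp only [if_neg h]; ring
    calc ftau τ X' + mInner Y (projSet Ω (M - X'))
        = τ * nuclearNorm X'
            + ∑ a, ∑ b, (Y a b * (projSet Ω (M - X')) a b + (1/2) * (X' a b)^2) := by
          rw [hftau, hmI, frob_sq]
          simp only [Finset.sum_add_distrib, Finset.mul_sum]
          ring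
      _ = τ * nuclearNorm X'
            + ∑ a, ∑ b, ((1/2) * (X' a b - A a b)^2
              + (Y a b * (projSet Ω M) a b - (1/2) * (A a b)^2)) := by
          congr 1
          refine Finset.sum_congr rfl fun a _ => Finset.sum_congr rfl fun b _ => ?_
          have h := entry a b
          linarith
      _ = (τ * nuclearNorm X' + (1/2) * frob (X' - A)^2) + C := by
          rw [frob_sq, hC]
          simp only [Finset.sum_add_distrib, Finset.mul_sum, Matrix.sub_apply]
          ring
  have hfrobnn : ∀ Z : Matrix (Fin n₁) (Fin n₂) ℝ, (0:ℝ) ≤ frob Z ^2 := by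
    intro Z; rw [frob_sq]; positivity
  have f₁min_iff : ∀ X₀ : Matrix (Fin n₁) (Fin n₂) ℝ,
      IsMinOn (fun X => ftau τ X + mInner Y (projSet Ω (M - X))) Set.univ X₀ ↔
      IsMinOn (fun X => τ * nuclearNorm X + (1 / 2) * frob (X - projSet Ω Y) ^ 2)
        Set.univ X₀ := by
    intro X₀
    rw [isMinOn_iff, isMinOn_iff]
    constructor
    · intro h X hX
      have h2 := h X hX
      try simp only at h2 ⊢
      have e1 := hconst X₀
      have e2 := hconst X
      rw [← hA]
      linarith
    · intro h X hX
      have h2 := h X hX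
      try simp only at h2 ⊢
      rw [← hA] at h2
      have e1 := hconst X₀
      have e2 := hconst X
      linarith
  refine ⟨f₁min_iff, ?_, ?_⟩
  · rw [f₁min_iff, isMinOn_iff]
    intro X hX
    have h1 := CORE X
    have h0 := hfrobnn (X - D)
    try simp only
    rw [← hA]
    linarith
  · intro X₀ hmin
    rw [f₁min_iff, isMinOn_iff] at hmin
    have h1 := hmin D (Set.mem_univ D)
    try simp only at h1
    rw [← hA] at h1
    have h2 := CORE X₀
    have h3 : frob (X₀ - D)^2 ≤ 0 := by linarith
    have h4 : ∑ a, ∑ b, ((X₀ - D) a b)^2 = 0 := by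
      refine le_antisymm ?_ (by positivity)
      rw [← frob_sq]; exact h3
    ext a b
    have h5 := (Finset.sum_eq_zero_iff_of_nonneg
      (fun a _ => Finset.sum_nonneg fun b _ => sq_nonneg _)).mp h4 a (Finset.mem_univ a)
    have h6 := (Finset.sum_eq_zero_iff_of_nonneg
      (fun b _ => sq_nonneg _)).mp h5 b (Finset.mem_univ b)
    have h7 : (X₀ - D) a b = 0 := pow_eq_zero_iff (n := 2) (by norm_num) |>.mp h6
    rw [Matrix.sub_apply] at h7
    linarith
end

section
/- In the setting of the SVT iteration for matrix completion, let (X*, Y*) be a primal-dual optimal pair, so that 0 = Z^k − P_Ω(Y^{k−1}) for some Z^k ∈ ∂f_τ(X^k) and 0 = Z* − P_Ω(Y*) for some Z* ∈ ∂f_τ(X*). Then ⟨X^k − X*, P_Ω(Y^{k−1} − Y*)⟩ ≥ ‖X^k − X*‖_F², and consequently, if 2δ_k − δ_k² ≥ β > 0, the residuals r_k := ‖P_Ω(Y^k − Y*)‖_F obey r_k² ≤ r_{k−1}² − β‖X^k − X*‖_F². -/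
open Matrix Filter Topology

namespace SVTAux
variable {n₁ n₂ : ℕ}

variable {n₁ n₂ : ℕ}

noncomputable def svQ (X : Matrix (Fin n₁) (Fin n₂) ℝ) (j : Fin n₂) : Fin n₂ → ℝ :=
  ⇑((Matrix.isHermitian_conjTranspose_mul_self X).eigenvectorBasis j)

noncomputable def svP (X : Matrix (Fin n₁) (Fin n₂) ℝ) (j : Fin n₂) : Fin n₁ → ℝ :=
  (singVal X j)⁻¹ • (X *ᵥ svQ X j)

lemma svQ_ortho (X : Matrix (Fin n₁) (Fin n₂) ℝ) (i j : Fin n₂) :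
    svQ X i ⬝ᵥ svQ X j = if i = j then 1 else 0 := by
  have h := orthonormal_iff_ite.mp
    ((Matrix.isHermitian_conjTranspose_mul_self X).eigenvectorBasis).orthonormal (i := i) (j := j)
  simpa [svQ, dotProduct, PiLp.inner_apply, RCLike.inner_apply, conj_trivial, mul_comm] using h

lemma mulVec_svQ_dot (X : Matrix (Fin n₁) (Fin n₂) ℝ) (i j : Fin n₂) :
    (X *ᵥ svQ X i) ⬝ᵥ (X *ᵥ svQ X j) =
      if i = j then (Matrix.isHermitian_conjTranspose_mul_self X).eigenvalues j else 0 := by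
  have h1 : (X *ᵥ svQ X i) ⬝ᵥ (X *ᵥ svQ X j) = svQ X i ⬝ᵥ ((Xᵀ * X) *ᵥ svQ X j) := by
    rw [← Matrix.mulVec_mulVec, Matrix.dotProduct_mulVec (svQ X i) Xᵀ,
      Matrix.vecMul_transpose]
  have h2 : (Xᵀ * X) *ᵥ svQ X j =
      ((Matrix.isHermitian_conjTranspose_mul_self X).eigenvalues j) • svQ X j := by
    simpa [svQ] using (Matrix.isHermitian_conjTranspose_mul_self X).mulVec_eigenvectorBasis j
  rw [h1, h2, dotProduct_smul, svQ_ortho]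
  split <;> simp

lemma eigval_nonneg (X : Matrix (Fin n₁) (Fin n₂) ℝ) (j : Fin n₂) :
    0 ≤ (Matrix.isHermitian_conjTranspose_mul_self X).eigenvalues j := by
  have h := mulVec_svQ_dot X j j
  rw [if_pos rfl] at h
  rw [← h]
  exact Finset.sum_nonneg fun i _ => mul_self_nonneg _

lemma singVal_nonneg (X : Matrix (Fin n₁) (Fin n₂) ℝ) (j : Fin n₂) : 0 ≤ singVal X j :=
  Real.sqrt_nonneg _

lemma singVal_sq (X : Matrix (Fin n₁) (Fin n₂) ℝ) (j : Fin n₂) :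
    singVal X j ^ 2 = (Matrix.isHermitian_conjTranspose_mul_self X).eigenvalues j :=
  Real.sq_sqrt (eigval_nonneg X j)

lemma mulVec_svQ_eq (X : Matrix (Fin n₁) (Fin n₂) ℝ) (j : Fin n₂) :
    X *ᵥ svQ X j = singVal X j • svP X j := by
  by_cases h : singVal X j = 0
  · have h0 : (X *ᵥ svQ X j) ⬝ᵥ (X *ᵥ svQ X j) = 0 := by
      rw [mulVec_svQ_dot, if_pos rfl, ← singVal_sq, h]; ring
    rw [dotProduct_self_eq_zero] at h0
    simp [h0, h, svP]
  · rw [svP, smul_smul, mul_inv_cancel₀ h, one_smul]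

lemma svP_dot (X : Matrix (Fin n₁) (Fin n₂) ℝ) (i j : Fin n₂) :
    svP X i ⬝ᵥ svP X j = if i = j ∧ singVal X j ≠ 0 then 1 else 0 := by
  rw [svP, svP, smul_dotProduct, dotProduct_smul, mulVec_svQ_dot]
  rcases eq_or_ne i j with rfl | hne
  · by_cases h : singVal X i = 0
    · rw [← singVal_sq]
      simp [h]
    · rw [← singVal_sq, if_pos rfl, if_pos (show i = i ∧ singVal X i ≠ 0 from ⟨rfl, h⟩)]
      simp only [smul_eq_mul]
      field_simp
  · simp [hne]
lemma svQ_complete (X : Matrix (Fin n₁) (Fin n₂) ℝ) (k l : Fin n₂) :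
    ∑ j, svQ X j k * svQ X j l = if k = l then 1 else 0 := by
  set hG := Matrix.isHermitian_conjTranspose_mul_self X
  have hU : (hG.eigenvectorUnitary : Matrix (Fin n₂) (Fin n₂) ℝ) *
      star (hG.eigenvectorUnitary : Matrix (Fin n₂) (Fin n₂) ℝ) = 1 :=
    Unitary.mul_star_self_of_mem hG.eigenvectorUnitary.2
  have := congrFun (congrFun hU k) l
  simpa [Matrix.mul_apply, Matrix.one_apply, Matrix.star_apply, svQ,
    mul_comm] using this

-- expansion of a vector in the orthonormal system q
lemma vec_expand (X : Matrix (Fin n₁) (Fin n₂) ℝ) (w : Fin n₂ → ℝ) (k : Fin n₂) :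
    w k = ∑ j, (svQ X j ⬝ᵥ w) * svQ X j k := by
  have : ∑ j, (svQ X j ⬝ᵥ w) * svQ X j k = ∑ l, w l * (if l = k then 1 else 0) := by
    simp only [dotProduct, Finset.sum_mul]
    rw [Finset.sum_comm]
    refine Finset.sum_congr rfl fun l _ => ?_
    rw [← svQ_complete X l k, Finset.mul_sum]
    exact Finset.sum_congr rfl fun j _ => by ring
  rw [this]
  simp

-- any mulVec decomposes along the q system
lemma mulVec_decomp (X : Matrix (Fin n₁) (Fin n₂) ℝ) (A : Matrix (Fin n₁) (Fin n₂) ℝ)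
    (w : Fin n₂ → ℝ) (i : Fin n₁) :
    (A *ᵥ w) i = ∑ j, (svQ X j ⬝ᵥ w) * (A *ᵥ svQ X j) i := by
  have h : ∀ l, w l = ∑ j, (svQ X j ⬝ᵥ w) * svQ X j l := vec_expand X w
  calc (A *ᵥ w) i = ∑ l, A i l * w l := rfl
    _ = ∑ l, A i l * ∑ j, (svQ X j ⬝ᵥ w) * svQ X j l := by simp_rw [← h]
    _ = ∑ l, ∑ j, (svQ X j ⬝ᵥ w) * (A i l * svQ X j l) := by
        refine Finset.sum_congr rfl fun l _ => ?_
        rw [Finset.mul_sum]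
        exact Finset.sum_congr rfl fun j _ => by ring
    _ = ∑ j, ∑ l, (svQ X j ⬝ᵥ w) * (A i l * svQ X j l) := Finset.sum_comm
    _ = ∑ j, (svQ X j ⬝ᵥ w) * (A *ᵥ svQ X j) i := by
        refine Finset.sum_congr rfl fun j _ => ?_
        rw [← Finset.mul_sum]
        rfl

lemma dotProduct_finsum {N m : ℕ} (v : Fin m → ℝ) (f : Fin N → Fin m → ℝ) :
    v ⬝ᵥ (∑ j, f j) = ∑ j, v ⬝ᵥ f j := by
  simp only [dotProduct, Finset.sum_apply, Finset.mul_sum]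
  rw [Finset.sum_comm]

lemma finsum_dotProduct {N m : ℕ} (v : Fin m → ℝ) (f : Fin N → Fin m → ℝ) :
    (∑ j, f j) ⬝ᵥ v = ∑ j, f j ⬝ᵥ v := by
  simp only [dotProduct, Finset.sum_apply, Finset.sum_mul]
  rw [Finset.sum_comm]

-- Bessel inequality for a pairwise-orthogonal family with norms ≤ 1
lemma bessel {N m : ℕ} (p : Fin N → Fin m → ℝ)
    (horth : ∀ i j, i ≠ j → p i ⬝ᵥ p j = 0) (hle : ∀ i, p i ⬝ᵥ p i ≤ 1)
    (a : Fin m → ℝ) : ∑ j, (p j ⬝ᵥ a) ^ 2 ≤ a ⬝ᵥ a := by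
  set c : Fin N → ℝ := fun j => p j ⬝ᵥ a with hc
  set r : Fin m → ℝ := a - ∑ j, c j • p j with hr
  have h0 : 0 ≤ r ⬝ᵥ r := Finset.sum_nonneg fun i _ => mul_self_nonneg _
  have hra : r ⬝ᵥ r = a ⬝ᵥ a - 2 * ∑ j, c j ^ 2 + ∑ j, c j ^ 2 * (p j ⬝ᵥ p j) := by
    have h1 : ∑ j, c j * (p j ⬝ᵥ a) = ∑ j, c j ^ 2 :=
      Finset.sum_congr rfl fun j _ => by
        have hj : p j ⬝ᵥ a = c j := rfl
        rw [hj]; ring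
    have h2 : ∑ j, c j * (a ⬝ᵥ p j) = ∑ j, c j ^ 2 :=
      Finset.sum_congr rfl fun j _ => by
        have hj : a ⬝ᵥ p j = c j := dotProduct_comm a (p j)
        rw [hj]; ring
    have h3 : ∑ i, c i * (p i ⬝ᵥ ∑ j, c j • p j) = ∑ j, c j ^ 2 * (p j ⬝ᵥ p j) := by
      refine Finset.sum_congr rfl fun i _ => ?_
      rw [dotProduct_finsum]
      simp only [dotProduct_smul, smul_eq_mul]
      rw [Finset.sum_eq_single i
        (fun j _ hji => by rw [horth i j (Ne.symm hji), mul_zero])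
        (fun h => absurd (Finset.mem_univ i) h)]
      ring
    rw [hr]
    rw [sub_dotProduct, dotProduct_sub, dotProduct_sub]
    rw [dotProduct_finsum, finsum_dotProduct, finsum_dotProduct]
    simp only [dotProduct_smul, smul_dotProduct, smul_eq_mul]
    rw [h1, h2, h3]
    ring
  have hfin : ∑ j, c j ^ 2 * (p j ⬝ᵥ p j) ≤ ∑ j, c j ^ 2 :=
    Finset.sum_le_sum fun j _ => by
      have := hle j
      have h2 : (0:ℝ) ≤ c j ^ 2 := sq_nonneg _
      nlinarith
  have := hra ▸ h0
  linarith
lemma svP_orth (X : Matrix (Fin n₁) (Fin n₂) ℝ) :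
    ∀ i j, i ≠ j → svP X i ⬝ᵥ svP X j = 0 := by
  intro i j h; rw [svP_dot]; simp [h]

lemma svP_dot_self_le (X : Matrix (Fin n₁) (Fin n₂) ℝ) (i : Fin n₂) :
    svP X i ⬝ᵥ svP X i ≤ 1 := by
  rw [svP_dot]; split <;> norm_num

lemma svQ_orth (X : Matrix (Fin n₁) (Fin n₂) ℝ) :
    ∀ i j, i ≠ j → svQ X i ⬝ᵥ svQ X j = 0 := by
  intro i j h; rw [svQ_ortho]; simp [h]

lemma svQ_dot_self_le (X : Matrix (Fin n₁) (Fin n₂) ℝ) (i : Fin n₂) :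
    svQ X i ⬝ᵥ svQ X i ≤ 1 := by
  rw [svQ_ortho]; simp

lemma vonNeumann (A : Matrix (Fin n₁) (Fin n₂) ℝ)
    (u : Fin n₂ → Fin n₁ → ℝ) (v : Fin n₂ → Fin n₂ → ℝ)
    (huo : ∀ i j, i ≠ j → u i ⬝ᵥ u j = 0) (hul : ∀ i, u i ⬝ᵥ u i ≤ 1)
    (hvo : ∀ i j, i ≠ j → v i ⬝ᵥ v j = 0) (hvl : ∀ i, v i ⬝ᵥ v i ≤ 1) :
    ∑ j, u j ⬝ᵥ (A *ᵥ v j) ≤ nuclearNorm A := by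
  have key : ∀ j, u j ⬝ᵥ (A *ᵥ v j) =
      ∑ k, singVal A k * ((u j ⬝ᵥ svP A k) * (svQ A k ⬝ᵥ v j)) := by
    intro j
    calc u j ⬝ᵥ (A *ᵥ v j) = ∑ i, u j i * (A *ᵥ v j) i := rfl
      _ = ∑ i, u j i * ∑ k, (svQ A k ⬝ᵥ v j) * (A *ᵥ svQ A k) i := by
          exact Finset.sum_congr rfl fun i _ => by rw [← mulVec_decomp A A (v j) i]
      _ = ∑ i, ∑ k, (svQ A k ⬝ᵥ v j) * (u j i * (A *ᵥ svQ A k) i) := by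
          refine Finset.sum_congr rfl fun i _ => ?_
          rw [Finset.mul_sum]
          exact Finset.sum_congr rfl fun k _ => by ring
      _ = ∑ k, ∑ i, (svQ A k ⬝ᵥ v j) * (u j i * (A *ᵥ svQ A k) i) := Finset.sum_comm
      _ = ∑ k, (svQ A k ⬝ᵥ v j) * (u j ⬝ᵥ (A *ᵥ svQ A k)) := by
          refine Finset.sum_congr rfl fun k _ => ?_
          rw [← Finset.mul_sum]
          rfl
      _ = ∑ k, singVal A k * ((u j ⬝ᵥ svP A k) * (svQ A k ⬝ᵥ v j)) := by
          refine Finset.sum_congr rfl fun k _ => ?_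
          rw [mulVec_svQ_eq, dotProduct_smul]
          simp only [smul_eq_mul]
          ring
  rw [Finset.sum_congr rfl fun j _ => key j, Finset.sum_comm]
  rw [nuclearNorm]
  refine Finset.sum_le_sum fun k _ => ?_
  rw [← Finset.mul_sum]
  have hS : (∑ j, (u j ⬝ᵥ svP A k) * (svQ A k ⬝ᵥ v j)) ≤ 1 := by
    have hrw : (∑ j, (u j ⬝ᵥ svP A k) * (svQ A k ⬝ᵥ v j)) =
        ∑ j, (u j ⬝ᵥ svP A k) * (v j ⬝ᵥ svQ A k) :=
      Finset.sum_congr rfl fun j _ => by rw [dotProduct_comm (svQ A k) (v j)]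
    rw [hrw]
    have h1 : ∑ j, (u j ⬝ᵥ svP A k) ^ 2 ≤ svP A k ⬝ᵥ svP A k := bessel u huo hul (svP A k)
    have h2 : ∑ j, (v j ⬝ᵥ svQ A k) ^ 2 ≤ svQ A k ⬝ᵥ svQ A k := bessel v hvo hvl (svQ A k)
    have hcs := Finset.sum_mul_sq_le_sq_mul_sq Finset.univ
      (fun j => u j ⬝ᵥ svP A k) (fun j => v j ⬝ᵥ svQ A k)
    have hn1 : (0:ℝ) ≤ ∑ j, (u j ⬝ᵥ svP A k) ^ 2 := Finset.sum_nonneg fun _ _ => sq_nonneg _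
    have hn2 : (0:ℝ) ≤ ∑ j, (v j ⬝ᵥ svQ A k) ^ 2 := Finset.sum_nonneg fun _ _ => sq_nonneg _
    have hp := svP_dot_self_le A k
    have hq := svQ_dot_self_le A k
    nlinarith [hcs, h1, h2, hn1, hn2, hp, hq]
  have := singVal_nonneg A k
  nlinarith [hS, this]

lemma nuclearNorm_eq (X : Matrix (Fin n₁) (Fin n₂) ℝ) :
    nuclearNorm X = ∑ j, svP X j ⬝ᵥ (X *ᵥ svQ X j) := by
  refine Finset.sum_congr rfl fun j _ => ?_
  rw [mulVec_svQ_eq, dotProduct_smul, svP_dot]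
  by_cases h : singVal X j = 0 <;> simp [h]

lemma nuclearNorm_add_le (A B : Matrix (Fin n₁) (Fin n₂) ℝ) :
    nuclearNorm (A + B) ≤ nuclearNorm A + nuclearNorm B := by
  rw [nuclearNorm_eq (A + B)]
  have hsplit : ∀ j, svP (A + B) j ⬝ᵥ ((A + B) *ᵥ svQ (A + B) j) =
      svP (A + B) j ⬝ᵥ (A *ᵥ svQ (A + B) j) + svP (A + B) j ⬝ᵥ (B *ᵥ svQ (A + B) j) := by
    intro j
    rw [Matrix.add_mulVec, dotProduct_add]
  rw [Finset.sum_congr rfl fun j _ => hsplit j, Finset.sum_add_distrib]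
  exact add_le_add
    (vonNeumann A (svP (A + B)) (svQ (A + B)) (svP_orth _) (svP_dot_self_le _)
      (svQ_orth _) (svQ_dot_self_le _))
    (vonNeumann B (svP (A + B)) (svQ (A + B)) (svP_orth _) (svP_dot_self_le _)
      (svQ_orth _) (svQ_dot_self_le _))

lemma nuclearNorm_zero : nuclearNorm (0 : Matrix (Fin n₁) (Fin n₂) ℝ) = 0 := by
  rw [nuclearNorm]
  refine Finset.sum_eq_zero fun j _ => ?_
  have h := mulVec_svQ_dot (0 : Matrix (Fin n₁) (Fin n₂) ℝ) j j
  rw [if_pos rfl, ← singVal_sq] at h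
  simp only [Matrix.zero_mulVec, zero_dotProduct] at h
  have := singVal_nonneg (0 : Matrix (Fin n₁) (Fin n₂) ℝ) j
  nlinarith [h, this]

lemma nuclearNorm_smul_le (c : ℝ) (hc : 0 ≤ c) (X : Matrix (Fin n₁) (Fin n₂) ℝ) :
    nuclearNorm (c • X) ≤ c * nuclearNorm X := by
  rcases hc.eq_or_lt with rfl | hc'
  · simp [nuclearNorm_zero]
  · rw [nuclearNorm_eq (c • X)]
    have h : ∀ j, svP (c • X) j ⬝ᵥ ((c • X) *ᵥ svQ (c • X) j) =
        c * (svP (c • X) j ⬝ᵥ (X *ᵥ svQ (c • X) j)) := by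
      intro j
      rw [Matrix.smul_mulVec, dotProduct_smul, smul_eq_mul]
    rw [Finset.sum_congr rfl fun j _ => h j, ← Finset.mul_sum]
    exact mul_le_mul_of_nonneg_left
      (vonNeumann X (svP (c • X)) (svQ (c • X)) (svP_orth _) (svP_dot_self_le _)
        (svQ_orth _) (svQ_dot_self_le _)) hc

lemma nuclearNorm_convex (A B : Matrix (Fin n₁) (Fin n₂) ℝ) (t : ℝ) (h0 : 0 ≤ t) (h1 : t ≤ 1) :
    nuclearNorm (A + t • (B - A)) ≤ (1 - t) * nuclearNorm A + t * nuclearNorm B := by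
  have hrw : A + t • (B - A) = (1 - t) • A + t • B := by
    ext i j
    simp [Matrix.add_apply, Matrix.smul_apply, Matrix.sub_apply]
    ring
  rw [hrw]
  calc nuclearNorm ((1 - t) • A + t • B)
      ≤ nuclearNorm ((1 - t) • A) + nuclearNorm (t • B) := nuclearNorm_add_le _ _
    _ ≤ (1 - t) * nuclearNorm A + t * nuclearNorm B :=
        add_le_add (nuclearNorm_smul_le _ (by linarith) _) (nuclearNorm_smul_le _ h0 _)


lemma mInner_comm (A B : Matrix (Fin n₁) (Fin n₂) ℝ) : mInner A B = mInner B A := by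
  simp [mInner, mul_comm]

lemma mInner_sub_left (A B C : Matrix (Fin n₁) (Fin n₂) ℝ) :
    mInner (A - B) C = mInner A C - mInner B C := by
  simp [mInner, Matrix.sub_apply, sub_mul, Finset.sum_sub_distrib]

lemma mInner_sub_right (A B C : Matrix (Fin n₁) (Fin n₂) ℝ) :
    mInner A (B - C) = mInner A B - mInner A C := by
  simp [mInner, Matrix.sub_apply, mul_sub, Finset.sum_sub_distrib]

lemma mInner_add_right (A B C : Matrix (Fin n₁) (Fin n₂) ℝ) :
    mInner A (B + C) = mInner A B + mInner A C := by
  simp [mInner, Matrix.add_apply, mul_add, Finset.sum_add_distrib]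

lemma mInner_smul_right (c : ℝ) (A B : Matrix (Fin n₁) (Fin n₂) ℝ) :
    mInner A (c • B) = c * mInner A B := by
  simp [mInner, Matrix.smul_apply, smul_eq_mul, Finset.mul_sum, mul_left_comm]

lemma mInner_smul_left (c : ℝ) (A B : Matrix (Fin n₁) (Fin n₂) ℝ) :
    mInner (c • A) B = c * mInner A B := by
  rw [mInner_comm, mInner_smul_right, mInner_comm]

lemma mInner_self_nonneg (A : Matrix (Fin n₁) (Fin n₂) ℝ) : 0 ≤ mInner A A :=
  Finset.sum_nonneg fun i _ => Finset.sum_nonneg fun j _ => mul_self_nonneg _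

lemma frob_sq (A : Matrix (Fin n₁) (Fin n₂) ℝ) : frob A ^ 2 = mInner A A := by
  rw [frob, Real.sq_sqrt (Finset.sum_nonneg fun i _ => Finset.sum_nonneg fun j _ => sq_nonneg (A i j))]
  simp [mInner, sq]

lemma projSet_sub (Ω : Finset (Fin n₁ × Fin n₂)) (A B : Matrix (Fin n₁) (Fin n₂) ℝ) :
    projSet Ω (A - B) = projSet Ω A - projSet Ω B := by
  ext i j
  by_cases h : (i, j) ∈ Ω <;> simp [projSet, h]

lemma projSet_add (Ω : Finset (Fin n₁ × Fin n₂)) (A B : Matrix (Fin n₁) (Fin n₂) ℝ) :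
    projSet Ω (A + B) = projSet Ω A + projSet Ω B := by
  ext i j
  by_cases h : (i, j) ∈ Ω <;> simp [projSet, h]

lemma projSet_smul (Ω : Finset (Fin n₁ × Fin n₂)) (c : ℝ) (A : Matrix (Fin n₁) (Fin n₂) ℝ) :
    projSet Ω (c • A) = c • projSet Ω A := by
  ext i j
  by_cases h : (i, j) ∈ Ω <;> simp [projSet, h]

lemma projSet_idem (Ω : Finset (Fin n₁ × Fin n₂)) (A : Matrix (Fin n₁) (Fin n₂) ℝ) :
    projSet Ω (projSet Ω A) = projSet Ω A := by
  ext i j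
  by_cases h : (i, j) ∈ Ω <;> simp [projSet, h]

lemma mInner_projSet_absorb (Ω : Finset (Fin n₁ × Fin n₂)) (A B : Matrix (Fin n₁) (Fin n₂) ℝ) :
    mInner (projSet Ω A) (projSet Ω B) = mInner (projSet Ω A) B := by
  refine Finset.sum_congr rfl fun i _ => Finset.sum_congr rfl fun j _ => ?_
  by_cases h : (i, j) ∈ Ω <;> simp [projSet, h]

lemma mInner_projSet_self_le (Ω : Finset (Fin n₁ × Fin n₂)) (A : Matrix (Fin n₁) (Fin n₂) ℝ) :
    mInner (projSet Ω A) (projSet Ω A) ≤ mInner A A := by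
  refine Finset.sum_le_sum fun i _ => Finset.sum_le_sum fun j _ => ?_
  by_cases h : (i, j) ∈ Ω <;> simp [projSet, h, mul_self_nonneg]

/-- From a subgradient of `ftau τ` we get a subgradient-type inequality for `τ • nuclearNorm`. -/
lemma subgrad_shift {τ : ℝ} (hτ : 0 < τ) {Z X₀ : Matrix (Fin n₁) (Fin n₂) ℝ}
    (hZ : IsSubgradAt (ftau τ) Z X₀) (Y : Matrix (Fin n₁) (Fin n₂) ℝ) :
    τ * nuclearNorm X₀ + mInner (Z - X₀) (Y - X₀) ≤ τ * nuclearNorm Y := by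
  set D := Y - X₀ with hD
  have key : ∀ t : ℝ, 0 < t → t ≤ 1 →
      mInner (Z - X₀) D ≤ τ * (nuclearNorm Y - nuclearNorm X₀) + t / 2 * mInner D D := by
    intro t ht0 ht1
    have h := hZ (X₀ + t • D)
    have hconv := SVTAux.nuclearNorm_convex X₀ Y t (le_of_lt ht0) ht1
    rw [← hD] at hconv
    have hfexp : frob (X₀ + t • D) ^ 2 =
        mInner X₀ X₀ + 2 * t * mInner X₀ D + t ^ 2 * mInner D D := by
      rw [frob_sq]
      have : mInner (X₀ + t • D) (X₀ + t • D) =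
          mInner X₀ (X₀ + t • D) + mInner (t • D) (X₀ + t • D) := by
        rw [mInner_comm, mInner_add_right, mInner_comm (X₀ + t • D) X₀,
          mInner_comm (X₀ + t • D) (t • D)]
      rw [this, mInner_add_right, mInner_add_right, mInner_smul_left, mInner_smul_left,
        mInner_smul_right, mInner_smul_right, mInner_comm D X₀]
      ring
    have hlin : mInner Z (X₀ + t • D - X₀) = t * mInner Z D := by
      have : X₀ + t • D - X₀ = t • D := by abel
      rw [this, mInner_smul_right]
    rw [ftau, ftau, hlin, hfexp, frob_sq] at h
    have hN : nuclearNorm (X₀ + t • D) ≤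
        (1 - t) * nuclearNorm X₀ + t * nuclearNorm Y := hconv
    have hsub : mInner (Z - X₀) D = mInner Z D - mInner X₀ D := mInner_sub_left Z X₀ D
    have htau := hτ.le
    nlinarith [h, hN, mul_le_mul_of_nonneg_left hN htau, ht0, sq_nonneg t]
  have main : mInner (Z - X₀) D ≤ τ * (nuclearNorm Y - nuclearNorm X₀) := by
    refine le_of_forall_pos_le_add fun ε hε => ?_
    have hDD : 0 ≤ mInner D D := mInner_self_nonneg D
    set t : ℝ := min 1 (ε / (mInner D D / 2 + 1)) with htdef
    have hden : 0 < mInner D D / 2 + 1 := by linarith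
    have ht0 : 0 < t := lt_min one_pos (div_pos hε hden)
    have ht1 : t ≤ 1 := min_le_left _ _
    have hkey := key t ht0 ht1
    have htle : t ≤ ε / (mInner D D / 2 + 1) := min_le_right _ _
    have : t / 2 * mInner D D ≤ ε := by
      have h1 : t * (mInner D D / 2) ≤ (ε / (mInner D D / 2 + 1)) * (mInner D D / 2) :=
        mul_le_mul_of_nonneg_right htle (by linarith)
      have h2 : (ε / (mInner D D / 2 + 1)) * (mInner D D / 2) ≤ ε := by
        rw [div_mul_eq_mul_div, div_le_iff₀ hden]
        nlinarith
      linarith [h1, h2]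
    linarith
  linarith [main]

/-- Strong monotonicity of the subdifferential of `ftau`. -/
lemma strong_mono {τ : ℝ} (hτ : 0 < τ) {Zk Xk Zs Xs : Matrix (Fin n₁) (Fin n₂) ℝ}
    (hZk : IsSubgradAt (ftau τ) Zk Xk) (hZs : IsSubgradAt (ftau τ) Zs Xs) :
    mInner (Xk - Xs) (Xk - Xs) ≤ mInner (Xk - Xs) (Zk - Zs) := by
  have h1 := subgrad_shift hτ hZk Xs
  have h2 := subgrad_shift hτ hZs Xk
  have e1 : mInner (Zk - Xk) (Xs - Xk) =
      mInner Zk Xs - mInner Zk Xk - mInner Xk Xs + mInner Xk Xk := by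
    rw [mInner_sub_left, mInner_sub_right, mInner_sub_right]; ring
  have e2 : mInner (Zs - Xs) (Xk - Xs) =
      mInner Zs Xk - mInner Zs Xs - mInner Xs Xk + mInner Xs Xs := by
    rw [mInner_sub_left, mInner_sub_right, mInner_sub_right]; ring
  have e3 : mInner (Xk - Xs) (Zk - Zs) =
      mInner Xk Zk - mInner Xk Zs - mInner Xs Zk + mInner Xs Zs := by
    rw [mInner_sub_left, mInner_sub_right, mInner_sub_right]; ring
  have e4 : mInner (Xk - Xs) (Xk - Xs) =
      mInner Xk Xk - mInner Xk Xs - mInner Xs Xk + mInner Xs Xs := by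
    rw [mInner_sub_left, mInner_sub_right, mInner_sub_right]; ring
  have c1 : mInner Zk Xs = mInner Xs Zk := mInner_comm _ _
  have c2 : mInner Zk Xk = mInner Xk Zk := mInner_comm _ _
  have c3 : mInner Zs Xk = mInner Xk Zs := mInner_comm _ _
  have c4 : mInner Zs Xs = mInner Xs Zs := mInner_comm _ _
  rw [e1] at h1; rw [e2] at h2; rw [e3, e4]
  linarith [h1, h2]

end SVTAux
/-- One step of the SVT convergence argument. If `Z^k = P_Ω(Y^{k-1})` with
`Z^k ∈ ∂f_τ(X^k)` and `Z* = P_Ω(Y*)` with `Z* ∈ ∂f_τ(X*)` (optimality conditions for a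
primal-dual optimal pair), `P_Ω(X*) = P_Ω(M)`, and `Y^k = Y^{k-1} + δ P_Ω(M - X^k)`, then
`⟨X^k - X*, P_Ω(Y^{k-1} - Y*)⟩ ≥ ‖X^k - X*‖_F²` and, when `2δ - δ² ≥ β > 0`,
`r_k² ≤ r_{k-1}² - β‖X^k - X*‖_F²` where `r_k = ‖P_Ω(Y^k - Y*)‖_F`. -/
theorem svt_step_inequality (n₁ n₂ : ℕ) (τ δ β : ℝ) (hτ : 0 < τ)
    (Ω : Finset (Fin n₁ × Fin n₂)) (M : Matrix (Fin n₁) (Fin n₂) ℝ)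
    (Xk Xs Ykm Ys Yk Zk Zs : Matrix (Fin n₁) (Fin n₂) ℝ)
    (hZk : IsSubgradAt (ftau τ) Zk Xk) (hZkeq : Zk = projSet Ω Ykm)
    (hZs : IsSubgradAt (ftau τ) Zs Xs) (hZseq : Zs = projSet Ω Ys)
    (hfeas : projSet Ω Xs = projSet Ω M)
    (hYk : Yk = Ykm + δ • projSet Ω (M - Xk))
    (hβ : 0 < β) (hδβ : β ≤ 2 * δ - δ ^ 2) :
    frob (Xk - Xs) ^ 2 ≤ mInner (Xk - Xs) (projSet Ω (Ykm - Ys)) ∧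
    frob (projSet Ω (Yk - Ys)) ^ 2 ≤
      frob (projSet Ω (Ykm - Ys)) ^ 2 - β * frob (Xk - Xs) ^ 2 := by
  classical
  -- identify Zk - Zs with the projected dual difference
  have hZdiff : Zk - Zs = projSet Ω (Ykm - Ys) := by
    rw [hZkeq, hZseq, SVTAux.projSet_sub]
  -- Part 1: strong monotonicity
  have hmono := SVTAux.strong_mono hτ hZk hZs
  have part1 : frob (Xk - Xs) ^ 2 ≤ mInner (Xk - Xs) (projSet Ω (Ykm - Ys)) := by
    rw [← hZdiff, SVTAux.frob_sq]
    exact hmono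
  refine ⟨part1, ?_⟩
  -- Part 2
  set d := Xk - Xs with hd
  set R := projSet Ω (Ykm - Ys) with hR
  set D := projSet Ω d with hDdef
  have hδpos : 0 < δ := by nlinarith [hβ, hδβ]
  -- projected update direction
  have hPM : projSet Ω (M - Xk) = -D := by
    rw [hDdef, hd]
    ext i j
    by_cases h : (i, j) ∈ Ω
    · have hfe := congrFun (congrFun hfeas i) j
      simp only [projSet, Matrix.of_apply, if_pos h] at hfe ⊢
      simp only [Matrix.neg_apply, Matrix.sub_apply, Matrix.of_apply, if_pos h]
      linarith
    · simp [projSet, h]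
  have hPYk : projSet Ω (Yk - Ys) = R - δ • D := by
    have h1 : Yk - Ys = (Ykm - Ys) + δ • projSet Ω (M - Xk) := by
      rw [hYk]; abel
    rw [h1, SVTAux.projSet_add, SVTAux.projSet_smul, SVTAux.projSet_idem, hPM, hR]
    rw [smul_neg]
    abel
  have hexp : mInner (R - δ • D) (R - δ • D) =
      mInner R R - 2 * δ * mInner R D + δ ^ 2 * mInner D D := by
    rw [SVTAux.mInner_sub_left, SVTAux.mInner_sub_right, SVTAux.mInner_sub_right,
      SVTAux.mInner_smul_left, SVTAux.mInner_smul_right, SVTAux.mInner_smul_left,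
      SVTAux.mInner_smul_right, SVTAux.mInner_comm D R]
    ring
  have hRD : mInner R D = mInner R d := by
    rw [hDdef, hR, SVTAux.mInner_projSet_absorb]
  have hRd_ge : mInner d d ≤ mInner R d := by
    have := part1
    rw [SVTAux.frob_sq] at this
    rw [SVTAux.mInner_comm R d]
    exact this
  have hDD_le : mInner D D ≤ mInner d d := by
    rw [hDdef]
    exact SVTAux.mInner_projSet_self_le Ω d
  have hdd_nonneg : 0 ≤ mInner d d := SVTAux.mInner_self_nonneg d
  rw [hPYk, SVTAux.frob_sq, SVTAux.frob_sq, SVTAux.frob_sq, hexp, hRD]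
  have h1 : 2 * δ * mInner d d ≤ 2 * δ * mInner R d :=
    mul_le_mul_of_nonneg_left hRd_ge (by linarith)
  have h2 : δ ^ 2 * mInner D D ≤ δ ^ 2 * mInner d d :=
    mul_le_mul_of_nonneg_left hDD_le (sq_nonneg δ)
  have h3 : β * mInner d d ≤ (2 * δ - δ ^ 2) * mInner d d :=
    mul_le_mul_of_nonneg_right hδβ hdd_nonneg
  linarith
end

section
/- With X_τ* the solution of the proximal problem (minimize τ‖X‖_* + (1/2)‖X‖_F² over the feasible set C) and X_∞ the minimum Frobenius-norm nuclear-norm minimizer over C, one has ‖X_τ*‖_F ≤ ‖X_∞‖_F for every τ > 0; in particular the family {X_τ*} is bounded in Frobenius norm uniformly in τ. -/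
open Matrix Filter Topology

/-- With `X_τ*` solving the proximal problem over the feasible set `C` and
`X_∞` the minimum Frobenius-norm nuclear-norm minimizer over `C`, one has
`‖X_τ*‖_F ≤ ‖X_∞‖_F` for all `τ > 0`; in particular `{X_τ*}` is bounded in Frobenius
norm uniformly in `τ`. -/
theorem prox_solutions_bounded (n₁ n₂ : ℕ) (C : Set (Matrix (Fin n₁) (Fin n₂) ℝ))
    (hC : C.Nonempty) (hCconv : Convex ℝ C)
    (Xstar : ℝ → Matrix (Fin n₁) (Fin n₂) ℝ)
    (hXstar : ∀ τ : ℝ, 0 < τ → Xstar τ ∈ C ∧ ∀ Z ∈ C, ftau τ (Xstar τ) ≤ ftau τ Z)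
    (Xinf : Matrix (Fin n₁) (Fin n₂) ℝ)
    (hXinf : Xinf ∈ C)
    (hXinf_min : ∀ Z ∈ C, nuclearNorm Xinf ≤ nuclearNorm Z)
    (hXinf_frob : ∀ Z ∈ C, nuclearNorm Z = nuclearNorm Xinf → frob Xinf ≤ frob Z) :
    (∀ τ : ℝ, 0 < τ → frob (Xstar τ) ≤ frob Xinf) ∧
    ∃ B : ℝ, ∀ τ : ℝ, 0 < τ → frob (Xstar τ) ≤ B := by
  have main : ∀ τ : ℝ, 0 < τ → frob (Xstar τ) ≤ frob Xinf := by
    intro τ hτ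
    obtain ⟨hmem, hopt⟩ := hXstar τ hτ
    have h1 : ftau τ (Xstar τ) ≤ ftau τ Xinf := hopt Xinf hXinf
    have h2 : nuclearNorm Xinf ≤ nuclearNorm (Xstar τ) := hXinf_min _ hmem
    have hsq : frob (Xstar τ) ^ 2 ≤ frob Xinf ^ 2 := by
      unfold ftau at h1
      nlinarith [mul_le_mul_of_nonneg_left h2 hτ.le]
    have h0 : 0 ≤ frob (Xstar τ) := Real.sqrt_nonneg _
    have h0' : 0 ≤ frob Xinf := Real.sqrt_nonneg _
    nlinarith
  exact ⟨main, frob Xinf, main⟩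
end

section
/- With X_τ* the solution of the proximal problem (minimize τ‖X‖_* + (1/2)‖X‖_F² over the feasible set C) and X_∞ the minimum Frobenius-norm nuclear-norm minimizer over C, the nuclear norms converge: lim_{τ→∞} ‖X_τ*‖_* = ‖X_∞‖_*. -/
open Matrix Filter Topology

/-- With `X_τ*` solving the proximal problem over `C` and `X_∞` the minimum
Frobenius-norm nuclear-norm minimizer over `C`, the nuclear norms converge:
`lim_{τ→∞} ‖X_τ*‖_* = ‖X_∞‖_*`. -/
theorem prox_nuclearNorm_tendsto (n₁ n₂ : ℕ) (C : Set (Matrix (Fin n₁) (Fin n₂) ℝ))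
    (hC : C.Nonempty) (hCconv : Convex ℝ C)
    (Xstar : ℝ → Matrix (Fin n₁) (Fin n₂) ℝ)
    (hXstar : ∀ τ : ℝ, 0 < τ → Xstar τ ∈ C ∧ ∀ Z ∈ C, ftau τ (Xstar τ) ≤ ftau τ Z)
    (Xinf : Matrix (Fin n₁) (Fin n₂) ℝ)
    (hXinf : Xinf ∈ C)
    (hXinf_min : ∀ Z ∈ C, nuclearNorm Xinf ≤ nuclearNorm Z)
    (hXinf_frob : ∀ Z ∈ C, nuclearNorm Z = nuclearNorm Xinf → frob Xinf ≤ frob Z) :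
    Tendsto (fun τ : ℝ => nuclearNorm (Xstar τ)) atTop (nhds (nuclearNorm Xinf)) := by
  have key : Tendsto (fun τ : ℝ => nuclearNorm Xinf + (1/2) * frob Xinf ^ 2 / τ) atTop
      (nhds (nuclearNorm Xinf)) := by
    have h0 : Tendsto (fun τ : ℝ => (1/2) * frob Xinf ^ 2 / τ) atTop (nhds 0) :=
      tendsto_const_nhds.div_atTop tendsto_id
    simpa using tendsto_const_nhds.add h0
  refine tendsto_of_tendsto_of_tendsto_of_le_of_le' tendsto_const_nhds key ?_ ?_
  · filter_upwards [eventually_gt_atTop (0:ℝ)] with τ hτ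
    exact hXinf_min _ ((hXstar τ hτ).1)
  · filter_upwards [eventually_gt_atTop (0:ℝ)] with τ hτ
    have h := (hXstar τ hτ).2 Xinf hXinf
    unfold ftau at h
    have hf : 0 ≤ (1/2) * frob (Xstar τ) ^ 2 := by positivity
    have : τ * nuclearNorm (Xstar τ) ≤ τ * nuclearNorm Xinf + (1/2) * frob Xinf ^ 2 := by
      nlinarith
    have hτ' : 0 < τ⁻¹ := inv_pos.mpr hτ
    rw [div_eq_mul_inv]
    nlinarith [mul_le_mul_of_nonneg_right this hτ'.le, mul_inv_cancel₀ hτ.ne']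
end

section
/- In the setting of Uzawa iterations for the general convex-constrained problem, let (X*, y*) be primal-dual optimal and let (X^k, y^k) be the iterates with y^k = [y^{k−1} + δ_k F(X^k)]₊. If ⟨y^{k−1} − y*, F(X^k) − F(X*)⟩ ≤ −‖X^k − X*‖_F², F is L-Lipschitz in the sense ‖F(X) − F(Y)‖ ≤ L‖X − Y‖_F, and 2δ_k − δ_k²L² ≥ β > 0, then ‖y^k − y*‖² ≤ ‖y^{k−1} − y*‖² − β‖X^k − X*‖_F². -/
open Matrix Filter Topology

/-- One step of the Uzawa convergence argument. If
`y^k = [y^{k-1} + δF(X^k)]₊`, `y* = [y* + δF(X*)]₊`,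
`⟨y^{k-1} - y*, F(X^k) - F(X*)⟩ ≤ -‖X^k - X*‖_F²`, `F` is `L`-Lipschitz and
`2δ - δ²L² ≥ β > 0`, then `‖y^k - y*‖² ≤ ‖y^{k-1} - y*‖² - β‖X^k - X*‖_F²`. -/
theorem uzawa_step_inequality (n₁ n₂ m : ℕ) (δ β L : ℝ)
    (F : Matrix (Fin n₁) (Fin n₂) ℝ → Fin m → ℝ)
    (Xk Xs : Matrix (Fin n₁) (Fin n₂) ℝ) (ykm ys yk : Fin m → ℝ)
    (hyk : yk = fun i => max (ykm i + δ * F Xk i) 0)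
    (hys : ys = fun i => max (ys i + δ * F Xs i) 0)
    (hmono : eInner (ykm - ys) (fun i => F Xk i - F Xs i) ≤ -(frob (Xk - Xs) ^ 2))
    (hLip : ∀ A B : Matrix (Fin n₁) (Fin n₂) ℝ,
      eNorm (fun i => F A i - F B i) ≤ L * frob (A - B))
    (hβ : 0 < β) (hδβ : β ≤ 2 * δ - δ ^ 2 * L ^ 2) :
    eNorm (yk - ys) ^ 2 ≤ eNorm (ykm - ys) ^ 2 - β * frob (Xk - Xs) ^ 2 := by
    -- abbreviations
  set e : Fin m → ℝ := fun i => F Xk i - F Xs i with he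
  have hsq : ∀ v : Fin m → ℝ, eNorm v ^ 2 = ∑ i, v i ^ 2 := by
    intro v
    have : (0:ℝ) ≤ ∑ i, v i ^ 2 := Finset.sum_nonneg fun i _ => sq_nonneg _
    rw [eNorm, Real.sq_sqrt this]
  have hs0 : (0:ℝ) ≤ frob (Xk - Xs) ^ 2 := sq_nonneg _
  -- pointwise contraction
  have hpt : ∀ i, (yk i - ys i) ^ 2 ≤ ((ykm i - ys i) + δ * e i) ^ 2 := by
    intro i
    have h1 : |yk i - ys i| ≤ |(ykm i + δ * F Xk i) - (ys i + δ * F Xs i)| := by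
      rw [hyk]
      conv_lhs => rw [hys]
      simpa using abs_max_sub_max_le_max (ykm i + δ * F Xk i) 0 (ys i + δ * F Xs i) 0
    have h2 : (ykm i + δ * F Xk i) - (ys i + δ * F Xs i) = (ykm i - ys i) + δ * e i := by
      simp only [he]; ring
    calc (yk i - ys i) ^ 2 = |yk i - ys i| ^ 2 := (sq_abs _).symm
      _ ≤ |(ykm i - ys i) + δ * e i| ^ 2 := by
          rw [← h2]; exact pow_le_pow_left₀ (abs_nonneg _) h1 2
      _ = ((ykm i - ys i) + δ * e i) ^ 2 := sq_abs _
  have hsum : ∑ i, (yk i - ys i) ^ 2 ≤ ∑ i, ((ykm i - ys i) + δ * e i) ^ 2 :=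
    Finset.sum_le_sum fun i _ => hpt i
  have hexp : ∑ i, ((ykm i - ys i) + δ * e i) ^ 2
      = (∑ i, (ykm i - ys i) ^ 2) + 2 * δ * (∑ i, (ykm i - ys i) * e i)
        + δ ^ 2 * (∑ i, e i ^ 2) := by
    rw [Finset.mul_sum, Finset.mul_sum, ← Finset.sum_add_distrib, ← Finset.sum_add_distrib]
    exact Finset.sum_congr rfl fun i _ => by ring
  have hI : (∑ i, (ykm i - ys i) * e i) ≤ -(frob (Xk - Xs) ^ 2) := by
    simpa [eInner, he] using hmono
  have hE : (∑ i, e i ^ 2) ≤ L ^ 2 * frob (Xk - Xs) ^ 2 := by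
    have h1 := hLip Xk Xs
    have h2 : eNorm e ^ 2 ≤ (L * frob (Xk - Xs)) ^ 2 :=
      pow_le_pow_left₀ (Real.sqrt_nonneg _) h1 2
    rw [hsq] at h2
    calc (∑ i, e i ^ 2) ≤ (L * frob (Xk - Xs)) ^ 2 := h2
      _ = L ^ 2 * frob (Xk - Xs) ^ 2 := by ring
  have hδ0 : 0 ≤ δ := by nlinarith [sq_nonneg (δ * L)]
  rw [hsq, hsq]
  have hyks : ∀ i, (yk - ys) i ^ 2 = (yk i - ys i) ^ 2 := fun i => rfl
  simp only [Pi.sub_apply]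
  nlinarith [hsum, hexp, hI, hE, mul_nonneg (mul_nonneg hδ0 hδ0) hs0,
    mul_le_mul_of_nonneg_left hI (mul_nonneg (by norm_num : (0:ℝ) ≤ 2) hδ0),
    mul_le_mul_of_nonneg_left hE (sq_nonneg δ)]
end

section
/- The singular value shrinkage operator is well defined: if X ∈ ℝ^{n₁×n₂} admits two reduced singular value decompositions X = U Σ V* = U' Σ V'* (with the same singular values σ₁ ≥ … ≥ σ_r > 0), then U diag((σ_i − τ)₊) V* = U' diag((σ_i − τ)₊) V'* for every τ ≥ 0; i.e., D_τ(X) does not depend on the choice of SVD. -/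
open Matrix Filter Topology

section Aux
open Polynomial

lemma midone {a r b : ℕ} (B : Matrix (Fin a) (Fin r) ℝ) (h : Bᵀ * B = 1)
    (C : Matrix (Fin r) (Fin b) ℝ) : Bᵀ * (B * C) = C := by
  rw [← Matrix.mul_assoc, h, Matrix.one_mul]

lemma pow_conj {n r : ℕ} (V : Matrix (Fin n) (Fin r) ℝ) (hV : Vᵀ * V = 1)
    (d : Fin r → ℝ) (k : ℕ) (hk : 1 ≤ k) :
    (V * Matrix.diagonal d * Vᵀ) ^ k = V * Matrix.diagonal (fun i => d i ^ k) * Vᵀ := by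
  induction k with
  | zero => omega
  | succ k ih =>
    rcases Nat.eq_or_lt_of_le hk with h | h
    · simp [← h, pow_one]
    · have hk1 : 1 ≤ k := by omega
      rw [pow_succ, ih hk1]
      simp only [Matrix.mul_assoc]
      rw [midone V hV]
      congr 1
      rw [← Matrix.mul_assoc, Matrix.diagonal_mul_diagonal]
      have : (fun i => d i ^ k * d i) = fun i => d i ^ (k + 1) := by funext i; ring
      rw [this]

lemma key_poly {n₁ n₂ r : ℕ} (U : Matrix (Fin n₁) (Fin r) ℝ) (V : Matrix (Fin n₂) (Fin r) ℝ)
    (σ : Fin r → ℝ) (hU : Uᵀ * U = 1) (hV : Vᵀ * V = 1) (q : Polynomial ℝ) :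
    (U * Matrix.diagonal σ * Vᵀ) *
      (Polynomial.aeval ((U * Matrix.diagonal σ * Vᵀ)ᵀ * (U * Matrix.diagonal σ * Vᵀ)) q) =
    U * Matrix.diagonal (fun i => σ i * q.eval (σ i ^ 2)) * Vᵀ := by
  set X := U * Matrix.diagonal σ * Vᵀ with hXdef
  have hXtX : Xᵀ * X = V * Matrix.diagonal (fun i => σ i ^ 2) * Vᵀ := by
    rw [hXdef]
    simp only [Matrix.transpose_mul, Matrix.transpose_transpose, Matrix.diagonal_transpose,
      Matrix.mul_assoc]
    rw [midone U hU]
    congr 1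
    rw [← Matrix.mul_assoc, Matrix.diagonal_mul_diagonal]
    congr 1; funext i; ring
  have hmonpow : ∀ k : ℕ, X * (Xᵀ * X) ^ k =
      U * Matrix.diagonal (fun i => σ i * (σ i ^ 2) ^ k) * Vᵀ := by
    intro k
    rcases Nat.eq_zero_or_pos k with hk | hk
    · subst hk
      simp only [pow_zero, Matrix.mul_one, hXdef]
      congr 2; funext i; ring
    · rw [hXtX, pow_conj V hV _ k hk, hXdef]
      simp only [Matrix.mul_assoc]
      rw [midone V hV]
      congr 1
      rw [← Matrix.mul_assoc, Matrix.diagonal_mul_diagonal]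
  induction q using Polynomial.induction_on' with
  | add p q hp hq =>
    rw [map_add, Matrix.mul_add, hp, hq]
    have : Matrix.diagonal (fun i => σ i * (p + q).eval (σ i ^ 2)) =
        Matrix.diagonal (fun i => σ i * p.eval (σ i ^ 2)) +
        Matrix.diagonal (fun i => σ i * q.eval (σ i ^ 2)) := by
      ext i j
      by_cases h : i = j <;> simp [Matrix.diagonal, h, eval_add] <;> ring
    rw [this, Matrix.mul_add, Matrix.add_mul]
  | monomial k a =>
    rw [aeval_monomial]
    simp only [← Algebra.smul_def]
    rw [Matrix.mul_smul, hmonpow k]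
    have : (fun i => σ i * eval (σ i ^ 2) ((monomial k) a)) =
        a • fun i => σ i * (σ i ^ 2) ^ k := by
      funext i; simp [eval_monomial, smul_eq_mul]; ring
    rw [this, Matrix.diagonal_smul, Matrix.mul_smul, Matrix.smul_mul]

end Aux
open Polynomial

/-- The singular value shrinkage operator is well defined: if `X` admits two
reduced SVDs `X = UΣVᵀ = U'ΣV'ᵀ` with the same (ordered, positive) singular values, then
`U diag((σᵢ - τ)₊) Vᵀ = U' diag((σᵢ - τ)₊) V'ᵀ` for every `τ ≥ 0`. -/
theorem shrinkage_well_defined (n₁ n₂ r : ℕ) (τ : ℝ) (hτ : 0 ≤ τ)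
    (X : Matrix (Fin n₁) (Fin n₂) ℝ)
    (U U' : Matrix (Fin n₁) (Fin r) ℝ) (V V' : Matrix (Fin n₂) (Fin r) ℝ)
    (σ : Fin r → ℝ) (hσ : ∀ i, 0 < σ i) (hord : Antitone σ)
    (hU : Uᵀ * U = 1) (hV : Vᵀ * V = 1) (hU' : U'ᵀ * U' = 1) (hV' : V'ᵀ * V' = 1)
    (hX : X = U * Matrix.diagonal σ * Vᵀ) (hX' : X = U' * Matrix.diagonal σ * V'ᵀ) :
    U * Matrix.diagonal (fun i => max (σ i - τ) 0) * Vᵀ =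
      U' * Matrix.diagonal (fun i => max (σ i - τ) 0) * V'ᵀ := by
  set s : Finset ℝ := Finset.univ.image (fun i => σ i ^ 2) with hs
  set g : ℝ → ℝ := fun x => max (Real.sqrt x - τ) 0 / Real.sqrt x with hg
  set q : Polynomial ℝ := Lagrange.interpolate s id g with hq
  have heval : ∀ i, q.eval (σ i ^ 2) = max (σ i - τ) 0 / σ i := by
    intro i
    have hi : σ i ^ 2 ∈ s := Finset.mem_image_of_mem _ (Finset.mem_univ i)
    have := Lagrange.eval_interpolate_at_node g (Set.injOn_id _) hi
    simp only [id] at this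
    rw [hq, this]
    simp only [hg, Real.sqrt_sq (hσ i).le]
  have hdiag : Matrix.diagonal (fun i => max (σ i - τ) 0) =
      Matrix.diagonal (fun i => σ i * q.eval (σ i ^ 2)) := by
    have : (fun i => max (σ i - τ) 0) = fun i => σ i * q.eval (σ i ^ 2) := by
      funext i; rw [heval i, mul_div_cancel₀ _ (hσ i).ne']
    rw [this]
  rw [hdiag, ← key_poly U V σ hU hV q, ← key_poly U' V' σ hU' hV' q, ← hX, ← hX']
end
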